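/- arXiv:0810.4632 — 4 statements merged into one kernel-verified Lean document; each statement's English description precedes it below -/
import Mathlib

section
/- Let X be an almost specified shift space and let D_0, …, D_{p−1} be a cyclic cover of X. Then for each i, the system (D_i, σ^p) has the specification property: there exists N ∈ ℕ such that whenever u is a word of length pk and v is a word of length pl, each occurring at coordinate 0 in some point of D_i (i.e. there is x ∈ D_i with x_{[0,pk)} = u, and similarly for v), there exists a word w of length pN such that the concatenation uwv occurs at coordinate 0 in some point of D_i. -/
open Set Filter

/-- The product topology on `ℤ → A`, where the alphabet `A` carries the
discrete topology. -/
def seqTop (A : Type*) : TopologicalSpace (ℤ → A) :=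
  @Pi.topologicalSpace ℤ (fun _ => A) (fun _ => ⊥)

/-- The shift map `σ`, defined by `σ(x)_i = x_{i+1}`. -/
def shiftMap {A : Type*} (x : ℤ → A) : ℤ → A := fun i => x (i + 1)

/-- A shift space: a nonempty, closed, shift-invariant subset of `A^ℤ`. -/
def IsShiftSpace {A : Type*} (X : Set (ℤ → A)) : Prop :=
  X.Nonempty ∧ @IsClosed _ (seqTop A) X ∧ shiftMap '' X = X

/-- The word `u` occurs in `x` at coordinate `i`. -/
def OccursAt {A : Type*} (x : ℤ → A) (u : List A) (i : ℤ) : Prop :=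
  ∀ k : Fin u.length, x (i + ((k : ℕ) : ℤ)) = u.get k

/-- `u` is a word of the language `B(X)` of `X`. -/
def IsWordOf {A : Type*} (X : Set (ℤ → A)) (u : List A) : Prop :=
  ∃ x ∈ X, OccursAt x u 0

/-- A shift of finite type: a shift space defined by finitely many
forbidden words. -/
def IsSFT {A : Type*} (X : Set (ℤ → A)) : Prop :=
  IsShiftSpace X ∧ ∃ F : Finset (List A),
    X = { x | ∀ u ∈ F, ∀ i : ℤ, ¬ OccursAt x u i }

/-- A code: a continuous shift-commuting map from `X` to `Y`. -/
def IsCode {A B : Type*} (X : Set (ℤ → A)) (Y : Set (ℤ → B))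
    (φ : (ℤ → A) → (ℤ → B)) : Prop :=
  Set.MapsTo φ X Y ∧ @ContinuousOn _ _ (seqTop A) (seqTop B) φ X ∧
    ∀ x ∈ X, φ (shiftMap x) = shiftMap (φ x)

/-- A factor code: a surjective code. -/
def IsFactorCode {A B : Type*} (X : Set (ℤ → A)) (Y : Set (ℤ → B))
    (φ : (ℤ → A) → (ℤ → B)) : Prop :=
  IsCode X Y φ ∧ Y ⊆ φ '' X

/-- A code is open if it maps (relatively) open subsets of `X` to
(relatively) open subsets of `Y`. -/
def IsOpenCode {A B : Type*} (X : Set (ℤ → A)) (Y : Set (ℤ → B))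
    (φ : (ℤ → A) → (ℤ → B)) : Prop :=
  ∀ U : Set (ℤ → A), @IsOpen _ (seqTop A) U →
    ∃ V : Set (ℤ → B), @IsOpen _ (seqTop B) V ∧ φ '' (X ∩ U) = Y ∩ V

/-- A code has a uniform lifting length `l`. -/
def HasUniformLiftingLength {A B : Type*} (X : Set (ℤ → A)) (Y : Set (ℤ → B))
    (φ : (ℤ → A) → (ℤ → B)) : Prop :=
  ∃ l : ℕ, ∀ k : ℕ, ∀ x ∈ X, ∀ y ∈ Y,
    (∀ i : ℤ, |i| ≤ (k : ℤ) + (l : ℤ) → φ x i = y i) →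
    ∃ x' ∈ X, (∀ i : ℤ, |i| ≤ (k : ℤ) → x' i = x i) ∧ φ x' = y

/-- Right continuing code. -/
def IsRightContinuing {A B : Type*} (X : Set (ℤ → A)) (Y : Set (ℤ → B))
    (φ : (ℤ → A) → (ℤ → B)) : Prop :=
  ∀ x ∈ X, ∀ y ∈ Y, (∃ M : ℤ, ∀ i ≤ M, φ x i = y i) →
    ∃ x' ∈ X, (∃ M : ℤ, ∀ i ≤ M, x' i = x i) ∧ φ x' = y

/-- Left continuing code. -/
def IsLeftContinuing {A B : Type*} (X : Set (ℤ → A)) (Y : Set (ℤ → B))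
    (φ : (ℤ → A) → (ℤ → B)) : Prop :=
  ∀ x ∈ X, ∀ y ∈ Y, (∃ M : ℤ, ∀ i, M ≤ i → φ x i = y i) →
    ∃ x' ∈ X, (∃ M : ℤ, ∀ i, M ≤ i → x' i = x i) ∧ φ x' = y

/-- `n` is a right continuing retract of `φ`. -/
def IsRightRetract {A B : Type*} (X : Set (ℤ → A)) (Y : Set (ℤ → B))
    (φ : (ℤ → A) → (ℤ → B)) (n : ℕ) : Prop :=
  ∀ x ∈ X, ∀ y ∈ Y, (∀ i : ℤ, i ≤ 0 → φ x i = y i) →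
    ∃ x' ∈ X, φ x' = y ∧ ∀ i : ℤ, i ≤ -(n : ℤ) → x' i = x i

/-- `n` is a left continuing retract of `φ`. -/
def IsLeftRetract {A B : Type*} (X : Set (ℤ → A)) (Y : Set (ℤ → B))
    (φ : (ℤ → A) → (ℤ → B)) (n : ℕ) : Prop :=
  ∀ x ∈ X, ∀ y ∈ Y, (∀ i : ℤ, 0 ≤ i → φ x i = y i) →
    ∃ x' ∈ X, φ x' = y ∧ ∀ i : ℤ, (n : ℤ) ≤ i → x' i = x i

/-- Right closing code. -/
def IsRightClosing {A B : Type*} (X : Set (ℤ → A))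
    (φ : (ℤ → A) → (ℤ → B)) : Prop :=
  ∀ x ∈ X, ∀ x' ∈ X, (∃ M : ℤ, ∀ i ≤ M, x i = x' i) → φ x = φ x' → x = x'

/-- Left closing code. -/
def IsLeftClosing {A B : Type*} (X : Set (ℤ → A))
    (φ : (ℤ → A) → (ℤ → B)) : Prop :=
  ∀ x ∈ X, ∀ x' ∈ X, (∃ M : ℤ, ∀ i, M ≤ i → x i = x' i) → φ x = φ x' → x = x'

/-- A sofic shift: a factor of a shift of finite type. -/
def IsSofic {B : Type*} (Y : Set (ℤ → B)) : Prop :=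
  ∃ (C : Type) (_ : Fintype C) (Z : Set (ℤ → C)) (π : (ℤ → C) → (ℤ → B)),
    IsSFT Z ∧ IsFactorCode Z Y π

/-- Irreducibility of a shift space. -/
def IsIrreducibleShift {A : Type*} (X : Set (ℤ → A)) : Prop :=
  ∀ u v : List A, IsWordOf X u → IsWordOf X v →
    ∃ w : List A, IsWordOf X (u ++ w ++ v)

/-- Mixing shift space. -/
def IsMixingShift {A : Type*} (X : Set (ℤ → A)) : Prop :=
  ∀ u v : List A, IsWordOf X u → IsWordOf X v →
    ∃ N : ℕ, ∀ n : ℕ, N ≤ n →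
      ∃ w : List A, w.length = n ∧ IsWordOf X (u ++ w ++ v)

/-- The almost specification property. -/
def AlmostSpecified {A : Type*} (X : Set (ℤ → A)) : Prop :=
  ∃ N : ℕ, ∀ u v : List A, IsWordOf X u → IsWordOf X v →
    ∃ w : List A, w.length ≤ N ∧ IsWordOf X (u ++ w ++ v)

/-- The specification property. -/
def HasSpecification {A : Type*} (X : Set (ℤ → A)) : Prop :=
  ∃ N : ℕ, ∀ u v : List A, IsWordOf X u → IsWordOf X v →
    ∃ w : List A, w.length = N ∧ IsWordOf X (u ++ w ++ v)

/-- A synchronizing word of `X`. -/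
def IsSynchronizingWord {A : Type*} (X : Set (ℤ → A)) (v : List A) : Prop :=
  IsWordOf X v ∧ ∀ u w : List A, IsWordOf X (u ++ v) → IsWordOf X (v ++ w) →
    IsWordOf X (u ++ v ++ w)

/-- A synchronized system: an irreducible shift space with a synchronizing
word. -/
def IsSynchronizedSystem {A : Type*} (X : Set (ℤ → A)) : Prop :=
  IsIrreducibleShift X ∧ ∃ v : List A, IsSynchronizingWord X v

/-- A subshift of `X`. -/
def IsSubshiftOf {A : Type*} (X' X : Set (ℤ → A)) : Prop :=
  IsShiftSpace X' ∧ X' ⊆ X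

/-- The number of words of length `n` in the language of `X`. -/
noncomputable def wordCount {A : Type*} (X : Set (ℤ → A)) (n : ℕ) : ℕ :=
  Set.ncard { u : List A | u.length = n ∧ IsWordOf X u }

/-- The entropy `h(X) = lim (1/n) log |B_n(X)|` of a shift space (the limit
exists by subadditivity, hence equals the limsup used here). -/
noncomputable def entropy {A : Type*} (X : Set (ℤ → A)) : ℝ :=
  Filter.limsup (fun n : ℕ => Real.log (wordCount X n) / (n : ℝ)) Filter.atTop

/-- The periodic condition `P(X) ↘ P(Y)`. -/
def PeriodicCondition {A B : Type*} (X : Set (ℤ → A)) (Y : Set (ℤ → B)) : Prop :=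
  ∀ n : ℕ, 0 < n → (∃ x ∈ X, shiftMap^[n] x = x) → ∃ y ∈ Y, shiftMap^[n] y = y

/-- A cyclic cover `D_0, …, D_{p-1}` of a shift space `X`. -/
def IsCyclicCover {A : Type*} (X : Set (ℤ → A)) (p : ℕ)
    (D : ZMod p → Set (ℤ → A)) : Prop :=
  0 < p ∧
  (∀ i, @IsClosed _ (seqTop A) (D i) ∧ D i ⊆ X) ∧
  (⋃ i, D i) = X ∧
  (∀ i, shiftMap '' D i = D (i + 1)) ∧
  (∀ i, ∀ U V : Set (ℤ → A), @IsOpen _ (seqTop A) U → @IsOpen _ (seqTop A) V →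
    (D i ∩ U).Nonempty → (D i ∩ V).Nonempty →
    ∃ N : ℕ, ∀ n : ℕ, N ≤ n →
      ((shiftMap^[p * n] '' (D i ∩ U)) ∩ (D i ∩ V)).Nonempty) ∧
  (∀ i j, i ≠ j → ∀ U : Set (ℤ → A), @IsOpen _ (seqTop A) U →
    X ∩ U ⊆ D i ∩ D j → X ∩ U = ∅)

/-- A left ray of `X`, recorded as `z : ℕ → A` where `z n` is the symbol at
coordinate `-(n+1)`. -/
def IsLeftRay {A : Type*} (X : Set (ℤ → A)) (z : ℕ → A) : Prop :=
  ∃ x ∈ X, ∀ n : ℕ, x (-((n : ℤ) + 1)) = z n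

/-- Append the finite word `w` on the right of a left-infinite sequence `z`
(the last symbol of `w` ends up at coordinate `-1`). -/
def rayAppend {A : Type*} (z : ℕ → A) (w : List A) : ℕ → A :=
  fun n => if h : n < w.length then w.reverse.get ⟨n, by simpa using h⟩
           else z (n - w.length)

/-- A left transitive point: every word of `X` occurs in `x_{(-∞,0]}`. -/
def IsLeftTransitive {A : Type*} (X : Set (ℤ → A)) (x : ℤ → A) : Prop :=
  ∀ u : List A, IsWordOf X u → ∃ i : ℤ, i + (u.length : ℤ) ≤ 1 ∧ OccursAt x u i

/-- A right transitive point: every word of `X` occurs in `x_{[0,∞)}`. -/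
def IsRightTransitive {A : Type*} (X : Set (ℤ → A)) (x : ℤ → A) : Prop :=
  ∀ u : List A, IsWordOf X u → ∃ i : ℤ, 0 ≤ i ∧ OccursAt x u i

/-- Right continuing almost everywhere. -/
def IsRightContinuingAE {A B : Type*} (X : Set (ℤ → A)) (Y : Set (ℤ → B))
    (φ : (ℤ → A) → (ℤ → B)) : Prop :=
  ∀ x ∈ X, IsLeftTransitive X x → ∀ y ∈ Y, (∃ M : ℤ, ∀ i ≤ M, φ x i = y i) →
    ∃ x' ∈ X, (∃ M : ℤ, ∀ i ≤ M, x' i = x i) ∧ φ x' = y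

/-- Left continuing almost everywhere. -/
def IsLeftContinuingAE {A B : Type*} (X : Set (ℤ → A)) (Y : Set (ℤ → B))
    (φ : (ℤ → A) → (ℤ → B)) : Prop :=
  ∀ x ∈ X, IsRightTransitive X x → ∀ y ∈ Y, (∃ M : ℤ, ∀ i, M ≤ i → φ x i = y i) →
    ∃ x' ∈ X, (∃ M : ℤ, ∀ i, M ≤ i → x' i = x i) ∧ φ x' = y

/-- The bi-infinite concatenations of blocks `1 0^s`, `s ∈ S`: the positions of
`1`s in `x` form the range of a strictly monotone `t : ℤ → ℤ` whose
consecutive gaps `t (n+1) - t n` all equal `s + 1` for some `s ∈ S`. -/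
def GapConcat (S : Set ℕ) : Set (ℤ → Bool) :=
  { x | ∃ t : ℤ → ℤ, StrictMono t ∧ (∀ n : ℤ, ∃ s ∈ S, t (n + 1) = t n + (s : ℤ) + 1) ∧
      (∀ i : ℤ, x i = true ↔ ∃ n : ℤ, t n = i) }

/-- The `S`-gap shift: the smallest shift space over `{0,1}` containing all
bi-infinite concatenations of blocks from `{1 0^s : s ∈ S}`. -/
def SGapShift (S : Set ℕ) : Set (ℤ → Bool) :=
  ⋂₀ { X : Set (ℤ → Bool) | IsShiftSpace X ∧ GapConcat S ⊆ X }

namespace CCP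

variable {A : Type*}

def SS (t : ℤ) (x : ℤ → A) : ℤ → A := fun j => x (j + t)

@[simp] lemma SS_apply (t : ℤ) (x : ℤ → A) (j : ℤ) : SS t x j = x (j + t) := rfl

lemma SS_SS (a b : ℤ) (x : ℤ → A) : SS a (SS b x) = SS (a + b) x := by
  funext j; simp [SS, add_assoc]

@[simp] lemma SS_zero (x : ℤ → A) : SS 0 x = x := by funext j; simp [SS]

lemma shiftMap_eq_SS (x : ℤ → A) : shiftMap x = SS 1 x := rfl

lemma iterate_shiftMap (n : ℕ) (x : ℤ → A) : shiftMap^[n] x = SS n x := by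
  induction n with
  | zero => simp
  | succ k ih =>
      rw [Function.iterate_succ_apply', ih, shiftMap_eq_SS, SS_SS, add_comm]
      norm_num

lemma shiftMap_injective : Function.Injective (shiftMap (A := A)) := by
  intro a b h
  funext j
  have := congrFun h (j - 1)
  simpa [shiftMap] using this

lemma SS_mem_of_inv {X : Set (ℤ → A)} (hinv : shiftMap '' X = X) :
    ∀ (t : ℤ) {x}, x ∈ X → SS t x ∈ X := by
  have h1 : ∀ {x}, x ∈ X → SS 1 x ∈ X := by
    intro x hx; rw [← hinv]; exact ⟨_, hx, rfl⟩
  have h1' : ∀ {x}, SS 1 x ∈ X → x ∈ X := by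
    intro x hx
    rw [← hinv] at hx
    obtain ⟨y, hy, hyx⟩ := hx
    rwa [show y = x from shiftMap_injective hyx] at hy
  intro t
  induction t using Int.induction_on with
  | zero => intro x hx; simpa using hx
  | succ k ih =>
      intro x hx
      rw [show ((k : ℤ) + 1) = 1 + (k : ℤ) by ring, ← SS_SS]
      exact h1 (ih hx)
  | pred k ih =>
      intro x hx
      apply h1'
      rw [SS_SS, show (1 + (-(k : ℤ) - 1)) = -(k : ℤ) by ring]
      exact ih hx

lemma SS_mem_D_iff {p : ℕ} {D : ZMod p → Set (ℤ → A)}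
    (hshift : ∀ j, shiftMap '' D j = D (j + 1)) :
    ∀ (t : ℤ) (x : ℤ → A) (j : ZMod p), SS t x ∈ D (j + (t : ZMod p)) ↔ x ∈ D j := by
  have h1 : ∀ (x : ℤ → A) (j : ZMod p), x ∈ D j ↔ SS 1 x ∈ D (j + 1) := by
    intro x j
    constructor
    · intro hx; rw [← hshift j]; exact ⟨x, hx, rfl⟩
    · intro hx
      rw [← hshift j] at hx
      obtain ⟨y, hy, hyx⟩ := hx
      rwa [show y = x from shiftMap_injective hyx] at hy
  intro t
  induction t using Int.induction_on with
  | zero => intro x j; simpa using Iff.rfl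
  | succ k ih =>
      intro x j
      have e1 : SS ((k : ℤ) + 1) x = SS 1 (SS (k : ℤ) x) := by
        rw [SS_SS, add_comm]
      have e2 : (j + (((k : ℤ) + 1 : ℤ) : ZMod p)) = (j + ((k : ℤ) : ZMod p)) + 1 := by
        push_cast; ring
      rw [e1, e2, ← h1 (SS (k : ℤ) x) (j + ((k : ℤ) : ZMod p))]
      exact ih x j
  | pred k ih =>
      intro x j
      have e1 : SS 1 (SS (-(k : ℤ) - 1) x) = SS (-(k : ℤ)) x := by
        rw [SS_SS]; ring_nf
      have e2 : (j + ((-(k : ℤ) - 1 : ℤ) : ZMod p)) + 1 = j + ((-(k : ℤ) : ℤ) : ZMod p) := by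
        push_cast; ring
      rw [h1 (SS (-(k : ℤ) - 1) x) (j + ((-(k : ℤ) - 1 : ℤ) : ZMod p)), e1, e2]
      exact ih x j

/-- window word -/
def win (y : ℤ → A) (s : ℤ) (n : ℕ) : List A :=
  (List.range n).map fun m : ℕ => y (s + (m : ℤ))

@[simp] lemma win_length (y : ℤ → A) (s : ℤ) (n : ℕ) : (win y s n).length = n := by
  rw [win, List.length_map, List.length_range]


lemma win_getElem (y : ℤ → A) (s : ℤ) (n : ℕ) (m : ℕ) (h : m < (win y s n).length) :
    (win y s n)[m] = y (s + m) := by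
  have hm : m < n := by rwa [win_length] at h
  simp only [win, List.getElem_map, List.getElem_range]

lemma occursAt_iff_nat {x : ℤ → A} {u : List A} {q : ℤ} :
    OccursAt x u q ↔ ∀ (m : ℕ) (h : m < u.length), x (q + m) = u[m] := by
  constructor
  · intro h m hm
    simpa [List.get_eq_getElem] using h ⟨m, hm⟩
  · intro h k
    simpa [List.get_eq_getElem] using h k k.isLt

lemma occursAt_win {x y : ℤ → A} {s : ℤ} {n : ℕ} {q : ℤ} :
    OccursAt x (win y s n) q ↔ ∀ j : ℤ, 0 ≤ j → j < n → x (q + j) = y (s + j) := by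
  rw [occursAt_iff_nat]
  constructor
  · intro h j hj0 hjn
    have hm : j.toNat < (win y s n).length := by rw [win_length]; omega
    have := h j.toNat hm
    rw [win_getElem] at this
    rw [show ((j.toNat : ℤ)) = j by omega] at this
    exact this
  · intro h m hm
    have hmn : m < n := by rwa [win_length] at hm
    rw [win_getElem]
    exact h m (by positivity) (by exact_mod_cast hmn)

lemma occursAt_append {x : ℤ → A} {u v : List A} {q : ℤ} :
    OccursAt x (u ++ v) q ↔ OccursAt x u q ∧ OccursAt x v (q + u.length) := by
  rw [occursAt_iff_nat, occursAt_iff_nat, occursAt_iff_nat]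
  constructor
  · intro h
    constructor
    · intro m hm
      have hm' : m < (u ++ v).length := by rw [List.length_append]; omega
      have := h m hm'
      rwa [List.getElem_append_left hm] at this
    · intro m hm
      have hm' : u.length + m < (u ++ v).length := by rw [List.length_append]; omega
      have := h (u.length + m) hm'
      rw [List.getElem_append_right (by omega)] at this
      simp only [Nat.add_sub_cancel_left] at this
      rw [show q + (u.length : ℤ) + (m : ℤ) = q + ((u.length + m : ℕ) : ℤ) by push_cast; ring]
      exact this
  · intro hh m hm
    have hm2 : m < u.length + v.length := by rwa [List.length_append] at hm
    rcases lt_or_ge m u.length with hlt | hge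
    · have := hh.1 m hlt
      rwa [List.getElem_append_left hlt]
    · have hmv : m - u.length < v.length := by omega
      have := hh.2 (m - u.length) hmv
      rw [List.getElem_append_right hge]
      rw [show q + (m : ℤ) = q + (u.length : ℤ) + ((m - u.length : ℕ) : ℤ) by
        push_cast [Nat.cast_sub hge]; ring]
      exact this

section Top
variable [TopologicalSpace A] [DiscreteTopology A]

lemma isOpen_cyl (y : ℤ → A) (F : Finset ℤ) : IsOpen {z : ℤ → A | ∀ j ∈ F, z j = y j} := by
  have : {z : ℤ → A | ∀ j ∈ F, z j = y j} = ⋂ j ∈ F, (fun z : ℤ → A => z j) ⁻¹' {y j} := by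
    ext z; simp
  rw [this]
  exact isOpen_biInter_finset fun j _ => (continuous_apply j).isOpen_preimage _ (isOpen_discrete _)

lemma isOpen_cyl_abs (y : ℤ → A) (L : ℕ) :
    IsOpen {z : ℤ → A | ∀ j : ℤ, |j| ≤ (L : ℤ) → z j = y j} := by
  have : {z : ℤ → A | ∀ j : ℤ, |j| ≤ (L : ℤ) → z j = y j}
      = {z : ℤ → A | ∀ j ∈ Finset.Icc (-(L : ℤ)) (L : ℤ), z j = y j} := by
    ext z
    constructor
    · intro h j hj
      rw [Finset.mem_Icc] at hj
      exact h j (abs_le.mpr hj)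
    · intro h j hj
      exact h j (Finset.mem_Icc.mpr (abs_le.mp hj))
  rw [this]
  exact isOpen_cyl y _

lemma isOpen_cyl_win (y : ℤ → A) (a b : ℤ) :
    IsOpen {z : ℤ → A | ∀ j : ℤ, a ≤ j → j < b → z j = y j} := by
  have : {z : ℤ → A | ∀ j : ℤ, a ≤ j → j < b → z j = y j}
      = {z : ℤ → A | ∀ j ∈ Finset.Ico a b, z j = y j} := by
    ext z
    constructor
    · intro h j hj
      rw [Finset.mem_Ico] at hj
      exact h j hj.1 hj.2
    · intro h j hj1 hj2
      exact h j (Finset.mem_Ico.mpr ⟨hj1, hj2⟩)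
  rw [this]
  exact isOpen_cyl y _

lemma exists_cyl_subset {U : Set (ℤ → A)} (hU : IsOpen U) {x : ℤ → A} (hx : x ∈ U) :
    ∃ L : ℕ, ∀ z, (∀ j : ℤ, |j| ≤ (L : ℤ) → z j = x j) → z ∈ U := by
  obtain ⟨I, u, hu, hsub⟩ := isOpen_pi_iff.mp hU x hx
  refine ⟨I.sup (fun j => j.natAbs), fun z hz => hsub ?_⟩
  intro j hj
  have h1 : j.natAbs ≤ I.sup (fun j => j.natAbs) := Finset.le_sup hj
  have h2 : z j = x j := hz j (by rw [Int.abs_eq_natAbs]; exact_mod_cast h1)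
  rw [h2]
  exact (hu j hj).2

lemma isClosed_coord_eq (s : ℤ) (c : A) : IsClosed {z : ℤ → A | z s = c} := by
  have : {z : ℤ → A | z s = c} = (fun z : ℤ → A => z s) ⁻¹' {c} := rfl
  rw [this]
  exact (isClosed_discrete _).preimage (continuous_apply s)

end Top


section PIN
variable [Fintype A] [TopologicalSpace A] [DiscreteTopology A]
variable {X : Set (ℤ → A)} {p : ℕ} {D : ZMod p → Set (ℤ → A)}

lemma SS_memD_zero (hshift : ∀ j, shiftMap '' D j = D (j + 1)) {i : ZMod p}
    {x : ℤ → A} (hx : x ∈ D i) (t : ℤ) (ht : (t : ZMod p) = 0) : SS t x ∈ D i := by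
  have := (SS_mem_D_iff hshift t x i).mpr hx
  rwa [ht, add_zero] at this

lemma cast_p_mul (p : ℕ) (q : ℤ) : (((p : ℤ) * q : ℤ) : ZMod p) = 0 := by
  push_cast
  simp

lemma exists_pin
    (hXne : X.Nonempty) (hXcl : IsClosed X)
    (hp : 0 < p)
    (hDcl : ∀ j, IsClosed (D j)) (hDcover : (⋃ j, D j) = X)
    (hshift : ∀ j, shiftMap '' D j = D (j + 1))
    (hDint : ∀ a b : ZMod p, a ≠ b → ∀ U : Set (ℤ → A), IsOpen U →
      X ∩ U ⊆ D a ∩ D b → X ∩ U = ∅)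
    (i : ZMod p) :
    ∃ (c : ℤ → A) (r : ℕ), c ∈ D i ∧
      ∀ z ∈ X, (∀ m : ℤ, |m| ≤ (r : ℤ) → z m = c m) → ∀ jj, (z ∈ D jj ↔ jj = i) := by
  haveI : NeZero p := ⟨hp.ne'⟩
  have hgood : ∃ g ∈ X, ∀ a b : ZMod p, a ≠ b → ¬(g ∈ D a ∧ g ∈ D b) := by
    by_contra hcon
    push_neg at hcon
    haveI : CompactSpace ↥X := isCompact_iff_compactSpace.mp hXcl.isCompact
    haveI : Nonempty ↥X := hXne.to_subtype
    haveI : LocallyCompactSpace ↥X := WeaklyLocallyCompactSpace.locallyCompactSpace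
    set f : ZMod p × ZMod p → Set ↥X := fun q =>
      if q.1 = q.2 then ∅ else {x : ↥X | (x : ℤ → A) ∈ D q.1 ∧ (x : ℤ → A) ∈ D q.2} with hf
    have hfc : ∀ q, IsClosed (f q) := by
      intro q
      rw [hf]
      dsimp only
      split
      · exact isClosed_empty
      · exact ((hDcl q.1).preimage continuous_subtype_val).inter
          ((hDcl q.2).preimage continuous_subtype_val)
    have hfu : ⋃ q, f q = univ := by
      ext x
      simp only [mem_iUnion, mem_univ, iff_true]
      obtain ⟨a, b, hab, h1, h2⟩ := hcon x x.2
      refine ⟨(a, b), ?_⟩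
      rw [hf]
      simp only [if_neg hab]
      exact ⟨h1, h2⟩
    obtain ⟨q, hq⟩ := nonempty_interior_of_iUnion_of_closed hfc hfu
    obtain ⟨x0, hx0⟩ := hq
    have hqne : q.1 ≠ q.2 := by
      intro h
      have hfq : f q = ∅ := by rw [hf]; simp [h]
      rw [hfq] at hx0
      simp at hx0
    have hmem : f q ∈ nhds x0 := mem_interior_iff_mem_nhds.mp hx0
    rw [nhds_subtype_eq_comap, mem_comap] at hmem
    obtain ⟨V, hV, hVsub⟩ := hmem
    obtain ⟨O, hOV, hO, hxO⟩ := mem_nhds_iff.mp hV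
    have hsub : X ∩ O ⊆ D q.1 ∩ D q.2 := by
      rintro w ⟨hwX, hwO⟩
      have hw : (⟨w, hwX⟩ : ↥X) ∈ f q := hVsub (hOV hwO)
      rw [hf] at hw
      simp only [if_neg hqne] at hw
      exact hw
    have hempty := hDint q.1 q.2 hqne O hO hsub
    have : (x0 : ℤ → A) ∈ X ∩ O := ⟨x0.2, hxO⟩
    rw [hempty] at this
    exact this
  obtain ⟨g, hgX, hgonly⟩ := hgood
  obtain ⟨j0, hj0⟩ : ∃ j0, g ∈ D j0 := by
    have : g ∈ ⋃ j, D j := by rw [hDcover]; exact hgX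
    simpa using this
  set t0 : ℤ := ((i - j0).val : ℤ) with ht0
  have htc : (t0 : ZMod p) = i - j0 := by
    rw [ht0]
    push_cast
    exact ZMod.natCast_zmod_val _
  set c := SS t0 g with hc
  have hcD : c ∈ D i := by
    have h1 := (SS_mem_D_iff hshift t0 g j0).mpr hj0
    have h2 : j0 + (t0 : ZMod p) = i := by rw [htc]; ring
    rwa [h2] at h1
  have hcuniq : ∀ m, c ∈ D m ↔ m = i := by
    intro m
    constructor
    · intro hm
      by_contra hne
      have hg' : g ∈ D (m - (t0 : ZMod p)) := by
        have he : (m - (t0 : ZMod p)) + (t0 : ZMod p) = m := by ring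
        exact (SS_mem_D_iff hshift t0 g (m - (t0 : ZMod p))).mp (by rw [he]; exact hm)
      have hne2 : m - (t0 : ZMod p) ≠ j0 := by
        intro h
        apply hne
        have : m = j0 + (t0 : ZMod p) := by rw [← h]; ring
        rw [this, htc]; ring
      exact hgonly _ _ hne2 ⟨hg', hj0⟩
    · rintro rfl; exact hcD
  have hsep : ∀ j : {j : ZMod p // j ≠ i}, ∃ L : ℕ,
      ∀ z, (∀ m : ℤ, |m| ≤ (L : ℤ) → z m = c m) → z ∉ D (j : ZMod p) := by
    intro j
    have hnc : c ∈ (D (j : ZMod p))ᶜ := by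
      intro h
      exact j.2 ((hcuniq _).mp h)
    obtain ⟨L, hL⟩ := exists_cyl_subset (hDcl (j : ZMod p)).isOpen_compl hnc
    exact ⟨L, fun z hz => hL z hz⟩
  choose Lf hLf using hsep
  set r := Finset.univ.sup Lf with hr
  refine ⟨c, r, hcD, ?_⟩
  intro z hzX hzwin jj
  have hnot : ∀ j : {j : ZMod p // j ≠ i}, z ∉ D (j : ZMod p) := by
    intro j
    apply hLf j z
    intro m hm
    apply hzwin m
    calc |m| ≤ (Lf j : ℤ) := hm
      _ ≤ (r : ℤ) := by exact_mod_cast Finset.le_sup (Finset.mem_univ j)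
  constructor
  · intro hzD
    by_contra hne
    exact hnot ⟨jj, hne⟩ hzD
  · rintro rfl
    have : z ∈ ⋃ j, D j := by rw [hDcover]; exact hzX
    obtain ⟨m, hm⟩ := mem_iUnion.mp this
    have hmi : m = jj := by
      by_contra hne
      exact hnot ⟨m, hne⟩ hm
    rwa [hmi] at hm

lemma rigid_of_pin
    (hXinv : shiftMap '' X = X)
    (hshift : ∀ j, shiftMap '' D j = D (j + 1))
    {i : ZMod p} {c : ℤ → A} {r : ℕ}
    (pin : ∀ z ∈ X, (∀ m : ℤ, |m| ≤ (r : ℤ) → z m = c m) → ∀ jj, (z ∈ D jj ↔ jj = i))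
    {Z : ℤ → A} (hZ : Z ∈ X) (q : ℤ)
    (hwin : ∀ m : ℤ, |m| ≤ (r : ℤ) → Z (q + m) = c m) :
    ∀ jj, (Z ∈ D jj ↔ jj = i - (q : ZMod p)) := by
  have h1 : SS q Z ∈ X := SS_mem_of_inv hXinv q hZ
  have h2 : ∀ m : ℤ, |m| ≤ (r : ℤ) → SS q Z m = c m := by
    intro m hm
    rw [SS_apply, add_comm]
    exact hwin m hm
  have h3 := pin (SS q Z) h1 h2
  intro jj
  have h4 : Z ∈ D jj ↔ SS q Z ∈ D (jj + (q : ZMod p)) := (SS_mem_D_iff hshift q Z jj).symm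
  rw [h4, h3 (jj + (q : ZMod p))]
  constructor
  · intro h
    rw [← h]; ring
  · intro h
    rw [h]; ring

end PIN

lemma feq (η : ℤ → A) {a b : ℤ} (h : a = b) : η a = η b := by rw [h]

lemma isWordOf_win {X : Set (ℤ → A)} (hXinv : shiftMap '' X = X)
    {y : ℤ → A} (hy : y ∈ X) (s : ℤ) (n : ℕ) :
    IsWordOf X (win y s n) := by
  refine ⟨SS s y, SS_mem_of_inv hXinv s hy, ?_⟩
  rw [occursAt_win]
  intro j _ _
  rw [SS_apply, zero_add, add_comm]

section STEP1
variable [Fintype A] [TopologicalSpace A] [DiscreteTopology A]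
variable {X : Set (ℤ → A)} {p : ℕ} {D : ZMod p → Set (ℤ → A)} {i : ZMod p}

lemma step1win
    (hXinv : shiftMap '' X = X) (hp : 0 < p)
    (hDsub : ∀ j, D j ⊆ X)
    (hshift : ∀ j, shiftMap '' D j = D (j + 1))
    (hmix : ∀ U V : Set (ℤ → A), IsOpen U → IsOpen V →
      (D i ∩ U).Nonempty → (D i ∩ V).Nonempty →
      ∃ N : ℕ, ∀ n : ℕ, N ≤ n → ((shiftMap^[p*n] '' (D i ∩ U)) ∩ (D i ∩ V)).Nonempty)
    {N0 : ℕ}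
    (hAS : ∀ u v : List A, IsWordOf X u → IsWordOf X v →
      ∃ w : List A, w.length ≤ N0 ∧ IsWordOf X (u ++ w ++ v))
    {c : ℤ → A} {r : ℕ} (hcD : c ∈ D i)
    (pin : ∀ z ∈ X, (∀ m : ℤ, |m| ≤ (r : ℤ) → z m = c m) → ∀ jj, (z ∈ D jj ↔ jj = i))
    {x z : ℤ → A} (hx : x ∈ D i) (hz : z ∈ D i) (K : ℕ) :
    ∃ m ≤ N0, ∃ ζ ∈ D i, (∀ s : ℤ, -((p*K : ℕ) : ℤ) ≤ s → s < 0 → ζ s = x s) ∧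
      (∀ t : ℤ, 0 ≤ t → t < ((p*K : ℕ) : ℤ) → ζ (((p*m : ℕ) : ℤ) + t) = z t) := by
  haveI : NeZero p := ⟨hp.ne'⟩
  set pK : ℕ := p * K with hpK
  -- x-side mixing: put a copy of the pin-window far to the left of the x-window
  set U1 : Set (ℤ → A) := {w | ∀ m : ℤ, |m| ≤ (r : ℤ) → w m = c m} with hU1
  set xm : ℤ → A := SS (-((pK : ℕ) : ℤ)) x with hxm
  have hxmD : xm ∈ D i := by
    apply SS_memD_zero hshift hx
    push_cast [hpK]
    simp
  set U2 : Set (ℤ → A) := {w | ∀ j : ℤ, 0 ≤ j → j < ((pK : ℕ) : ℤ) → w j = xm j} with hU2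
  obtain ⟨M1, hM1⟩ := hmix U1 U2 (isOpen_cyl_abs c r) (isOpen_cyl_win xm 0 (pK : ℤ))
    ⟨c, hcD, fun m _ => rfl⟩ ⟨xm, hxmD, fun j _ _ => rfl⟩
  set n1 : ℕ := max M1 (r + 1) with hn1
  obtain ⟨xstar, ⟨w1, ⟨hw1D, hw1U⟩, hw1map⟩, hxD, hxU2⟩ := hM1 n1 (le_max_left _ _)
  set a : ℕ := p * n1 with ha
  have hxw : xstar = SS ((a : ℕ) : ℤ) w1 := by rw [← hw1map, iterate_shiftMap]
  have hxstar_c : ∀ m : ℤ, |m| ≤ (r : ℤ) → xstar (m - (a : ℤ)) = c m := by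
    intro m hm
    rw [hxw, SS_apply, show m - (a : ℤ) + (a : ℤ) = m by ring]
    exact hw1U m hm
  have hxstar_x : ∀ j : ℤ, 0 ≤ j → j < ((pK : ℕ) : ℤ) → xstar j = x (j - (pK : ℤ)) := by
    intro j h1 h2
    have h3 := hxU2 j h1 h2
    rw [h3, hxm, SS_apply]
    exact feq x (by ring)
  -- z-side mixing
  set V1 : Set (ℤ → A) := {w | ∀ j : ℤ, 0 ≤ j → j < ((pK : ℕ) : ℤ) → w j = z j} with hV1
  obtain ⟨M2, hM2⟩ := hmix V1 U1 (isOpen_cyl_win z 0 (pK : ℤ)) (isOpen_cyl_abs c r)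
    ⟨z, hz, fun j _ _ => rfl⟩ ⟨c, hcD, fun m _ => rfl⟩
  set n2 : ℕ := max M2 (K + r + 1) with hn2
  obtain ⟨zstar, ⟨w2, ⟨hw2D, hw2V⟩, hw2map⟩, hzD2, hzU1⟩ := hM2 n2 (le_max_left _ _)
  set b : ℕ := p * n2 with hb
  have hzw : zstar = SS ((b : ℕ) : ℤ) w2 := by rw [← hw2map, iterate_shiftMap]
  have hzstar_c : ∀ m : ℤ, |m| ≤ (r : ℤ) → zstar m = c m := hzU1
  have hzstar_z : ∀ j : ℤ, 0 ≤ j → j < ((pK : ℕ) : ℤ) → zstar (j - (b : ℤ)) = z j := by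
    intro j h1 h2
    rw [hzw, SS_apply, show j - (b : ℤ) + (b : ℤ) = j by ring]
    exact hw2V j h1 h2
  -- bounds
  have hra : r + 1 ≤ a := by
    have h1 : r + 1 ≤ n1 := le_max_right _ _
    have h2 : n1 ≤ p * n1 := Nat.le_mul_of_pos_left n1 hp
    omega
  have hrb : pK + r + 1 ≤ b := by
    have h1 : K + r + 1 ≤ n2 := le_max_right _ _
    have h2 : p * (K + r + 1) ≤ p * n2 := Nat.mul_le_mul_left p h1
    have h3 : p * (K + r + 1) = p * K + p * (r + 1) := by ring
    have h4 : r + 1 ≤ p * (r + 1) := Nat.le_mul_of_pos_left _ hp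
    omega
  -- glue words
  set lenU : ℕ := a + r + pK with hlenU
  set lenV : ℕ := b + r + 1 with hlenV
  set Udag : List A := win xstar (-((a : ℤ) + (r : ℤ))) lenU with hUdag
  set Vdag : List A := win zstar (-(b : ℤ)) lenV with hVdag
  obtain ⟨wd, hwdlen, Z0, hZ0X, hocc⟩ := hAS Udag Vdag
    (isWordOf_win hXinv (hDsub i hxD) _ _) (isWordOf_win hXinv (hDsub i hzD2) _ _)
  obtain ⟨hUw, hV⟩ := occursAt_append.mp hocc
  obtain ⟨hU, _⟩ := occursAt_append.mp hUw
  have hUeval : ∀ j : ℤ, 0 ≤ j → j < (lenU : ℤ) →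
      Z0 j = xstar (-((a : ℤ) + (r : ℤ)) + j) := by
    intro j h1 h2
    have h3 := occursAt_win.mp (by rw [hUdag] at hU; exact hU) j h1 h2
    rwa [zero_add] at h3
  have hlen12 : ((Udag ++ wd).length : ℤ) = (lenU : ℤ) + (wd.length : ℤ) := by
    rw [List.length_append, hUdag, win_length]; push_cast; ring
  set E : ℤ := (lenU : ℤ) + (wd.length : ℤ) with hE
  have hVeval : ∀ j : ℤ, 0 ≤ j → j < (lenV : ℤ) → Z0 (E + j) = zstar (-(b : ℤ) + j) := by
    intro j h1 h2
    have h3 := occursAt_win.mp (by rw [hVdag] at hV; exact hV) j h1 h2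
    rw [zero_add, hlen12] at h3
    exact h3
  -- rigidity
  have hcast_lenU : ((lenU : ℕ) : ℤ) = (a : ℤ) + (r : ℤ) + (pK : ℤ) := by
    rw [hlenU]; push_cast; ring
  have hcast_lenV : ((lenV : ℕ) : ℤ) = (b : ℤ) + (r : ℤ) + 1 := by
    rw [hlenV]; push_cast; ring
  have hwin1 : ∀ m : ℤ, |m| ≤ (r : ℤ) → Z0 ((r : ℤ) + m) = c m := by
    intro m hm
    obtain ⟨hm1, hm2⟩ := abs_le.mp hm
    have h1 : (0 : ℤ) ≤ (r : ℤ) + m := by omega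
    have h2 : (r : ℤ) + m < (lenU : ℤ) := by
      rw [hcast_lenU]
      have : (r : ℤ) + 1 ≤ (a : ℤ) := by exact_mod_cast hra
      have hpk0 : (0 : ℤ) ≤ (pK : ℤ) := by positivity
      omega
    rw [hUeval _ h1 h2, show -((a : ℤ) + (r : ℤ)) + ((r : ℤ) + m) = m - (a : ℤ) by ring]
    exact hxstar_c m hm
  have hrig1 := rigid_of_pin hXinv hshift pin hZ0X (r : ℤ) hwin1
  have hwin2 : ∀ m : ℤ, |m| ≤ (r : ℤ) → Z0 ((E + (b : ℤ)) + m) = c m := by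
    intro m hm
    obtain ⟨hm1, hm2⟩ := abs_le.mp hm
    have hrb' : ((pK : ℤ) + (r : ℤ) + 1 : ℤ) ≤ (b : ℤ) := by exact_mod_cast hrb
    have hpk0 : (0 : ℤ) ≤ (pK : ℤ) := by positivity
    have h1 : (0 : ℤ) ≤ (b : ℤ) + m := by omega
    have h2 : (b : ℤ) + m < (lenV : ℤ) := by rw [hcast_lenV]; omega
    have h3 := hVeval ((b : ℤ) + m) h1 h2
    rw [show E + (b : ℤ) + m = E + ((b : ℤ) + m) by ring, h3,
      show -(b : ℤ) + ((b : ℤ) + m) = m by ring]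
    exact hzstar_c m hm
  have hrig2 := rigid_of_pin hXinv hshift pin hZ0X (E + (b : ℤ)) hwin2
  have hZ0D : Z0 ∈ D (i - (((r : ℤ)) : ZMod p)) := (hrig1 _).mpr rfl
  have hkey : (((E + (b : ℤ)) : ℤ) : ZMod p) = (((r : ℤ) : ℤ) : ZMod p) := by
    have h := (hrig2 _).mp hZ0D
    exact (sub_right_inj.mp h).symm
  have hEb : (((E + (b : ℤ)) : ℤ) : ZMod p) = ((r : ℕ) : ZMod p) + ((wd.length : ℕ) : ZMod p) := by
    rw [hE, hcast_lenU, ha, hb, hpK]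
    push_cast [ZMod.natCast_self]
    ring
  have hrr : (((r : ℤ) : ℤ) : ZMod p) = ((r : ℕ) : ZMod p) := by push_cast; ring
  have hsum : ((r : ℕ) : ZMod p) + ((wd.length : ℕ) : ZMod p) = ((r : ℕ) : ZMod p) := by
    rw [← hEb, hkey, hrr]
  have hw0 : ((wd.length : ℕ) : ZMod p) = 0 := add_eq_left.mp hsum
  have hdvd : p ∣ wd.length := (ZMod.natCast_eq_zero_iff _ _).mp hw0
  set mg : ℕ := wd.length / p with hmgdef
  have hpmg : p * mg = wd.length := Nat.mul_div_cancel' hdvd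
  have hpk0 : (0 : ℤ) ≤ (pK : ℤ) := by positivity
  have hra' : (r : ℤ) + 1 ≤ (a : ℤ) := by exact_mod_cast hra
  have hrb' : ((pK : ℕ) : ℤ) + (r : ℤ) + 1 ≤ (b : ℤ) := by exact_mod_cast hrb
  refine ⟨mg, le_trans (Nat.div_le_self _ _) hwdlen, SS ((lenU : ℕ) : ℤ) Z0, ?_, ?_, ?_⟩
  · have h1 := (SS_mem_D_iff hshift ((lenU : ℕ) : ℤ) Z0 (i - (((r : ℤ)) : ZMod p))).mpr hZ0D
    have h2 : (i - (((r : ℤ)) : ZMod p)) + ((((lenU : ℕ) : ℤ)) : ZMod p) = i := by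
      rw [hlenU, ha, hpK]
      push_cast [ZMod.natCast_self]
      ring
    rwa [h2] at h1
  · intro s hs1 hs2
    have h1 : (0 : ℤ) ≤ s + (lenU : ℤ) := by rw [hcast_lenU]; omega
    have h2 : s + (lenU : ℤ) < (lenU : ℤ) := by omega
    calc SS ((lenU : ℕ) : ℤ) Z0 s = Z0 (s + (lenU : ℤ)) := rfl
      _ = xstar (-((a : ℤ) + (r : ℤ)) + (s + (lenU : ℤ))) := hUeval _ h1 h2
      _ = xstar (s + (pK : ℤ)) := feq xstar (by rw [hcast_lenU]; ring)
      _ = x ((s + (pK : ℤ)) - (pK : ℤ)) := hxstar_x _ (by omega) (by omega)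
      _ = x s := feq x (by ring)
  · intro t ht1 ht2
    have harg : ((p * mg : ℕ) : ℤ) + t + (lenU : ℤ) = E + t := by
      rw [hE, hpmg]
      ring
    have hblen : t < (lenV : ℤ) := by rw [hcast_lenV]; omega
    calc SS ((lenU : ℕ) : ℤ) Z0 (((p * mg : ℕ) : ℤ) + t)
        = Z0 (((p * mg : ℕ) : ℤ) + t + (lenU : ℤ)) := rfl
      _ = Z0 (E + t) := feq Z0 harg
      _ = zstar (-(b : ℤ) + t) := hVeval t ht1 hblen
      _ = zstar (t - (b : ℤ)) := feq zstar (by ring)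
      _ = z t := hzstar_z t ht1 ht2

end STEP1

def Rel (Di : Set (ℤ → A)) (p m : ℕ) (x z : ℤ → A) : Prop :=
  ∃ η ∈ Di, (∀ s : ℤ, s < 0 → η s = x s) ∧ ∀ t : ℤ, 0 ≤ t → η (((p * m : ℕ) : ℤ) + t) = z t

lemma rel_iff {Di : Set (ℤ → A)} {p m : ℕ} {x z : ℤ → A} :
    Rel Di p m x z ↔ ∃ η ∈ Di, (∀ s : ℤ, s < 0 → η s = x s) ∧
      ∀ t : ℤ, 0 ≤ t → η (((p * m : ℕ) : ℤ) + t) = z t := Iff.rfl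

section STEP2
variable [Fintype A] [TopologicalSpace A] [DiscreteTopology A]
variable {X : Set (ℤ → A)} {p : ℕ} {D : ZMod p → Set (ℤ → A)} {i : ZMod p}

lemma step1
    (hXinv : shiftMap '' X = X) (hp : 0 < p)
    (hDsub : ∀ j, D j ⊆ X)
    (hshift : ∀ j, shiftMap '' D j = D (j + 1))
    (hmix : ∀ U V : Set (ℤ → A), IsOpen U → IsOpen V →
      (D i ∩ U).Nonempty → (D i ∩ V).Nonempty →
      ∃ N : ℕ, ∀ n : ℕ, N ≤ n → ((shiftMap^[p*n] '' (D i ∩ U)) ∩ (D i ∩ V)).Nonempty)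
    {N0 : ℕ}
    (hAS : ∀ u v : List A, IsWordOf X u → IsWordOf X v →
      ∃ w : List A, w.length ≤ N0 ∧ IsWordOf X (u ++ w ++ v))
    {c : ℤ → A} {r : ℕ} (hcD : c ∈ D i)
    (pin : ∀ z ∈ X, (∀ m : ℤ, |m| ≤ (r : ℤ) → z m = c m) → ∀ jj, (z ∈ D jj ↔ jj = i))
    (hDicl : IsClosed (D i))
    {x z : ℤ → A} (hx : x ∈ D i) (hz : z ∈ D i) :
    ∃ m ≤ N0, Rel (D i) p m x z := by
  have hKall : ∀ K : ℕ, ∃ m, m ≤ N0 ∧ ∃ ζ ∈ D i,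
      (∀ s : ℤ, -((p*K : ℕ) : ℤ) ≤ s → s < 0 → ζ s = x s) ∧
      (∀ t : ℤ, 0 ≤ t → t < ((p*K : ℕ) : ℤ) → ζ (((p*m : ℕ) : ℤ) + t) = z t) := by
    intro K
    obtain ⟨m, hm, h⟩ := step1win hXinv hp hDsub hshift hmix hAS hcD pin hx hz K
    exact ⟨m, hm, h⟩
  choose f hf using hKall
  set F : ℕ → Fin (N0+1) := fun K => ⟨f K, Nat.lt_succ_of_le (hf K).1⟩ with hF
  obtain ⟨mfin, hmfin⟩ := Finite.exists_infinite_fiber F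
  have hinf : (F ⁻¹' {mfin}).Infinite := Set.infinite_coe_iff.mp hmfin
  set m : ℕ := (mfin : ℕ) with hmdef
  have hmle : m ≤ N0 := Nat.lt_succ_iff.mp mfin.isLt
  have hallK : ∀ K : ℕ, ∃ ζ ∈ D i,
      (∀ s : ℤ, -((p*K : ℕ) : ℤ) ≤ s → s < 0 → ζ s = x s) ∧
      (∀ t : ℤ, 0 ≤ t → t < ((p*K : ℕ) : ℤ) → ζ (((p*m : ℕ) : ℤ) + t) = z t) := by
    intro K
    obtain ⟨K', hK'mem, hKK'⟩ := hinf.exists_gt K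
    have hfK' : f K' = m := by
      have h1 : F K' = mfin := hK'mem
      rw [hF] at h1
      exact congrArg Fin.val h1
    obtain ⟨ζ, hζD, hp1, hp2⟩ := (hf K').2
    rw [hfK'] at hp2
    have hle : ((p*K : ℕ) : ℤ) ≤ ((p*K' : ℕ) : ℤ) := by
      exact_mod_cast Nat.mul_le_mul_left p (le_of_lt hKK')
    refine ⟨ζ, hζD, ?_, ?_⟩
    · intro s h1 h2
      exact hp1 s (by omega) h2
    · intro t h1 h2
      exact hp2 t h1 (by omega)
  set V : ℕ → Set (ℤ → A) := fun K => {η | η ∈ D i ∧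
    (∀ s : ℤ, -((p*K : ℕ) : ℤ) ≤ s → s < 0 → η s = x s) ∧
    (∀ t : ℤ, 0 ≤ t → t < ((p*K : ℕ) : ℤ) → η (((p*m : ℕ) : ℤ) + t) = z t)} with hVdef
  have hdec : ∀ K, V (K+1) ⊆ V K := by
    intro K η hη
    obtain ⟨h0, h1, h2⟩ := hη
    have hle : ((p*K : ℕ) : ℤ) ≤ ((p*(K+1) : ℕ) : ℤ) := by
      exact_mod_cast Nat.mul_le_mul_left p (Nat.le_succ K)
    exact ⟨h0, fun s a b => h1 s (by omega) b, fun t a b => h2 t a (by omega)⟩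
  have hne : ∀ K, (V K).Nonempty := by
    intro K
    obtain ⟨ζ, hζ, h1, h2⟩ := hallK K
    exact ⟨ζ, hζ, h1, h2⟩
  have hclosed : ∀ K, IsClosed (V K) := by
    intro K
    have hVeq : V K = D i ∩ ((⋂ s : ℤ, {η : ℤ → A | -((p*K : ℕ) : ℤ) ≤ s → s < 0 → η s = x s}) ∩
        (⋂ t : ℤ, {η : ℤ → A | 0 ≤ t → t < ((p*K : ℕ) : ℤ) → η (((p*m : ℕ) : ℤ) + t) = z t})) := by
      ext η
      simp only [hVdef, mem_setOf_eq, mem_inter_iff, mem_iInter]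
    rw [hVeq]
    refine hDicl.inter (IsClosed.inter ?_ ?_)
    · refine isClosed_iInter (fun s => ?_)
      by_cases hs : -((p*K : ℕ) : ℤ) ≤ s ∧ s < 0
      · have he : {η : ℤ → A | -((p*K : ℕ) : ℤ) ≤ s → s < 0 → η s = x s}
            = {η : ℤ → A | η s = x s} := by
          ext η
          simp only [mem_setOf_eq]
          exact ⟨fun h => h hs.1 hs.2, fun h _ _ => h⟩
        rw [he]; exact isClosed_coord_eq s (x s)
      · have he : {η : ℤ → A | -((p*K : ℕ) : ℤ) ≤ s → s < 0 → η s = x s} = univ := by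
          ext η
          simp only [mem_setOf_eq, mem_univ, iff_true]
          intro h1 h2
          exact absurd ⟨h1, h2⟩ hs
        rw [he]; exact isClosed_univ
    · refine isClosed_iInter (fun t => ?_)
      by_cases ht : 0 ≤ t ∧ t < ((p*K : ℕ) : ℤ)
      · have he : {η : ℤ → A | 0 ≤ t → t < ((p*K : ℕ) : ℤ) → η (((p*m : ℕ) : ℤ) + t) = z t}
            = {η : ℤ → A | η (((p*m : ℕ) : ℤ) + t) = z t} := by
          ext η
          simp only [mem_setOf_eq]
          exact ⟨fun h => h ht.1 ht.2, fun h _ _ => h⟩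
        rw [he]; exact isClosed_coord_eq _ (z t)
      · have he : {η : ℤ → A | 0 ≤ t → t < ((p*K : ℕ) : ℤ) → η (((p*m : ℕ) : ℤ) + t) = z t}
            = univ := by
          ext η
          simp only [mem_setOf_eq, mem_univ, iff_true]
          intro h1 h2
          exact absurd ⟨h1, h2⟩ ht
        rw [he]; exact isClosed_univ
  obtain ⟨η, hη⟩ := IsCompact.nonempty_iInter_of_sequence_nonempty_isCompact_isClosed
    V hdec hne ((hclosed 0).isCompact) hclosed
  rw [mem_iInter] at hη
  refine ⟨m, hmle, η, (hη 0).1, ?_, ?_⟩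
  · intro s hs
    have hK : ((s.natAbs : ℕ) : ℤ) ≤ ((p * s.natAbs : ℕ) : ℤ) := by
      exact_mod_cast Nat.le_mul_of_pos_left _ hp
    exact (hη s.natAbs).2.1 s (by omega) hs
  · intro t ht
    have hK : ((t.toNat + 1 : ℕ) : ℤ) ≤ ((p * (t.toNat + 1) : ℕ) : ℤ) := by
      exact_mod_cast Nat.le_mul_of_pos_left _ hp
    exact (hη (t.toNat + 1)).2.2 t ht (by omega)

lemma isClosed_relSet {Di : Set (ℤ → A)} (hcl : IsClosed Di) (p m : ℕ) :
    IsClosed {q : (ℤ → A) × (ℤ → A) | Rel Di p m q.1 q.2} := by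
  have hW : IsClosed {w : ((ℤ → A) × (ℤ → A)) × (ℤ → A) |
      w.2 ∈ Di ∧ (∀ s : ℤ, s < 0 → w.2 s = w.1.1 s) ∧
      ∀ t : ℤ, 0 ≤ t → w.2 (((p*m : ℕ) : ℤ) + t) = w.1.2 t} := by
    have e : {w : ((ℤ → A) × (ℤ → A)) × (ℤ → A) |
        w.2 ∈ Di ∧ (∀ s : ℤ, s < 0 → w.2 s = w.1.1 s) ∧
        ∀ t : ℤ, 0 ≤ t → w.2 (((p*m : ℕ) : ℤ) + t) = w.1.2 t}
        = ((fun w : ((ℤ → A) × (ℤ → A)) × (ℤ → A) => w.2) ⁻¹' Di) ∩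
          ((⋂ s : ℤ, {w : ((ℤ → A) × (ℤ → A)) × (ℤ → A) | s < 0 → w.2 s = w.1.1 s}) ∩
           (⋂ t : ℤ, {w : ((ℤ → A) × (ℤ → A)) × (ℤ → A) |
              0 ≤ t → w.2 (((p*m : ℕ) : ℤ) + t) = w.1.2 t})) := by
      ext w
      simp only [mem_setOf_eq, mem_inter_iff, mem_preimage, mem_iInter]
    rw [e]
    refine (hcl.preimage continuous_snd).inter (IsClosed.inter ?_ ?_)
    · refine isClosed_iInter (fun s => ?_)
      by_cases hs : s < 0
      · have he : {w : ((ℤ → A) × (ℤ → A)) × (ℤ → A) | s < 0 → w.2 s = w.1.1 s}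
            = {w : ((ℤ → A) × (ℤ → A)) × (ℤ → A) | w.2 s = w.1.1 s} := by
          ext w
          simp only [mem_setOf_eq]
          exact ⟨fun h => h hs, fun h _ => h⟩
        rw [he]
        exact isClosed_eq ((continuous_apply s).comp continuous_snd)
          ((continuous_apply s).comp (continuous_fst.comp continuous_fst))
      · have he : {w : ((ℤ → A) × (ℤ → A)) × (ℤ → A) | s < 0 → w.2 s = w.1.1 s} = univ := by
          ext w
          simp only [mem_setOf_eq, mem_univ, iff_true]
          intro h
          exact absurd h hs
        rw [he]; exact isClosed_univ
    · refine isClosed_iInter (fun t => ?_)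
      by_cases ht : 0 ≤ t
      · have he : {w : ((ℤ → A) × (ℤ → A)) × (ℤ → A) |
            0 ≤ t → w.2 (((p*m : ℕ) : ℤ) + t) = w.1.2 t}
            = {w : ((ℤ → A) × (ℤ → A)) × (ℤ → A) | w.2 (((p*m : ℕ) : ℤ) + t) = w.1.2 t} := by
          ext w
          simp only [mem_setOf_eq]
          exact ⟨fun h => h ht, fun h _ => h⟩
        rw [he]
        exact isClosed_eq ((continuous_apply _).comp continuous_snd)
          ((continuous_apply t).comp (continuous_snd.comp continuous_fst))
      · have he : {w : ((ℤ → A) × (ℤ → A)) × (ℤ → A) |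
            0 ≤ t → w.2 (((p*m : ℕ) : ℤ) + t) = w.1.2 t} = univ := by
          ext w
          simp only [mem_setOf_eq, mem_univ, iff_true]
          intro h
          exact absurd h ht
        rw [he]; exact isClosed_univ
  have himg : {q : (ℤ → A) × (ℤ → A) | Rel Di p m q.1 q.2}
      = Prod.fst '' {w : ((ℤ → A) × (ℤ → A)) × (ℤ → A) |
          w.2 ∈ Di ∧ (∀ s : ℤ, s < 0 → w.2 s = w.1.1 s) ∧
          ∀ t : ℤ, 0 ≤ t → w.2 (((p*m : ℕ) : ℤ) + t) = w.1.2 t} := by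
    ext q
    constructor
    · rintro ⟨η, h1, h2, h3⟩
      exact ⟨(q, η), ⟨h1, h2, h3⟩, rfl⟩
    · rintro ⟨w, ⟨h1, h2, h3⟩, rfl⟩
      exact ⟨w.2, h1, h2, h3⟩
  rw [himg]
  exact isClosedMap_fst_of_compactSpace _ hW

lemma unif {Di : Set (ℤ → A)} (hDicl : IsClosed Di) (hDine : Di.Nonempty)
    {p N0 : ℕ}
    (hcov : ∀ x ∈ Di, ∀ z ∈ Di, ∃ m ≤ N0, Rel Di p m x z) :
    ∃ (m0 L : ℕ) (xh zh : ℤ → A), xh ∈ Di ∧ zh ∈ Di ∧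
      ∀ x' ∈ Di, ∀ z' ∈ Di, (∀ j : ℤ, |j| ≤ (L : ℤ) → x' j = xh j) →
        (∀ j : ℤ, |j| ≤ (L : ℤ) → z' j = zh j) → Rel Di p m0 x' z' := by
  haveI : CompactSpace ↥Di := isCompact_iff_compactSpace.mp hDicl.isCompact
  haveI : Nonempty ↥Di := hDine.to_subtype
  haveI : LocallyCompactSpace (↥Di × ↥Di) := WeaklyLocallyCompactSpace.locallyCompactSpace
  set J : Fin (N0+1) → Set (↥Di × ↥Di) := fun m =>
    {q | Rel Di p (m : ℕ) (q.1 : ℤ → A) (q.2 : ℤ → A)} with hJ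
  have hJc : ∀ m, IsClosed (J m) := by
    intro m
    have h1 : Continuous (fun q : ↥Di × ↥Di => (((q.1 : ℤ → A), (q.2 : ℤ → A)) : (ℤ → A) × (ℤ → A))) :=
      (continuous_subtype_val.comp continuous_fst).prodMk
        (continuous_subtype_val.comp continuous_snd)
    exact (isClosed_relSet hDicl p (m : ℕ)).preimage h1
  have hJu : ⋃ m, J m = univ := by
    ext q
    simp only [mem_iUnion, mem_univ, iff_true]
    obtain ⟨m, hm, hr⟩ := hcov (q.1 : ℤ → A) q.1.2 (q.2 : ℤ → A) q.2.2
    exact ⟨⟨m, Nat.lt_succ_of_le hm⟩, hr⟩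
  obtain ⟨m0, hm0ne⟩ := nonempty_interior_of_iUnion_of_closed hJc hJu
  obtain ⟨q0, hq0⟩ := hm0ne
  obtain ⟨q01, q02⟩ := q0
  have hnh : J m0 ∈ nhds (q01, q02) := mem_interior_iff_mem_nhds.mp hq0
  rw [mem_nhds_prod_iff] at hnh
  obtain ⟨u, hu, v, hv, huv⟩ := hnh
  rw [nhds_subtype_eq_comap, mem_comap] at hu hv
  obtain ⟨Vx, hVx, hVxsub⟩ := hu
  obtain ⟨Vz, hVz, hVzsub⟩ := hv
  obtain ⟨Ox, hOxsub, hOxopen, hxOx⟩ := mem_nhds_iff.mp hVx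
  obtain ⟨Oz, hOzsub, hOzopen, hzOz⟩ := mem_nhds_iff.mp hVz
  obtain ⟨Lx, hLx⟩ := exists_cyl_subset hOxopen hxOx
  obtain ⟨Lz, hLz⟩ := exists_cyl_subset hOzopen hzOz
  refine ⟨(m0 : ℕ), max Lx Lz, (q01 : ℤ → A), (q02 : ℤ → A), q01.2, q02.2, ?_⟩
  intro x' hx' z' hz' hxw hzw
  have hx'O : x' ∈ Ox := hLx x' (fun j hj => hxw j
    (le_trans hj (by exact_mod_cast le_max_left Lx Lz)))
  have hz'O : z' ∈ Oz := hLz z' (fun j hj => hzw j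
    (le_trans hj (by exact_mod_cast le_max_right Lx Lz)))
  have hq : ((⟨x', hx'⟩ : ↥Di), (⟨z', hz'⟩ : ↥Di)) ∈ J m0 :=
    huv ⟨hVxsub (hOxsub hx'O), hVzsub (hOzsub hz'O)⟩
  exact hq

end STEP2

section ASSEMBLY
variable [Fintype A] [TopologicalSpace A] [DiscreteTopology A]
variable {X : Set (ℤ → A)} {p : ℕ} {D : ZMod p → Set (ℤ → A)} {i : ZMod p}

lemma assembly
    (hp : 0 < p)
    (hshift : ∀ j, shiftMap '' D j = D (j + 1))
    (hmix : ∀ U V : Set (ℤ → A), IsOpen U → IsOpen V →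
      (D i ∩ U).Nonempty → (D i ∩ V).Nonempty →
      ∃ N : ℕ, ∀ n : ℕ, N ≤ n → ((shiftMap^[p*n] '' (D i ∩ U)) ∩ (D i ∩ V)).Nonempty)
    (hDicl : IsClosed (D i)) (hDine : (D i).Nonempty)
    {N0 : ℕ}
    (hstep : ∀ x ∈ D i, ∀ z ∈ D i, ∃ m ≤ N0, Rel (D i) p m x z) :
    ∃ N : ℕ, ∀ x ∈ D i, ∀ z ∈ D i, Rel (D i) p N x z := by
  obtain ⟨m0, L, xh, zh, hxhD, hzhD, hunif⟩ := unif hDicl hDine hstep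
  set Lp : ℕ := L + 1 with hLp
  set O1 : Set (ℤ → A) := {w | ∀ j : ℤ, |j| ≤ (L : ℤ) → w j = xh j} with hO1
  set O2 : Set (ℤ → A) := {w | ∀ j : ℤ, |j| ≤ (L : ℤ) → w j = zh j} with hO2
  obtain ⟨M21, hM21⟩ := hmix O2 O1 (isOpen_cyl_abs zh L) (isOpen_cyl_abs xh L)
    ⟨zh, hzhD, fun j _ => rfl⟩ ⟨xh, hxhD, fun j _ => rfl⟩
  refine ⟨2*m0 + 2*Lp + 2*N0 + M21 + L + 1, ?_⟩
  intro x hx z hz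
  -- leg 1
  have hxtD : SS (-((p*Lp : ℕ) : ℤ)) xh ∈ D i := by
    apply SS_memD_zero hshift hxhD
    push_cast [ZMod.natCast_self]
    ring
  obtain ⟨m1, hm1, hrel1⟩ := hstep x hx _ hxtD
  obtain ⟨η1, hη1D, hη1past, hη1fut⟩ := rel_iff.mp hrel1
  -- leg 3
  have hztD : SS ((p*Lp : ℕ) : ℤ) zh ∈ D i := by
    apply SS_memD_zero hshift hzhD
    push_cast [ZMod.natCast_self]
    ring
  obtain ⟨m2, hm2, hrel3⟩ := hstep _ hztD z hz
  obtain ⟨η3, hη3D, hη3past, hη3fut⟩ := rel_iff.mp hrel3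
  -- bstar
  set bstar : ℤ → A := SS (-((p*Lp : ℕ) : ℤ)) η3 with hbstar
  have hbD : bstar ∈ D i := by
    apply SS_memD_zero hshift hη3D
    push_cast [ZMod.natCast_self]
    ring
  have hLpLp : (L : ℤ) < ((p*Lp : ℕ) : ℤ) := by
    have h1 : Lp ≤ p * Lp := Nat.le_mul_of_pos_left _ hp
    have h2 : ((Lp : ℕ) : ℤ) ≤ ((p*Lp : ℕ) : ℤ) := by exact_mod_cast h1
    have h3 : ((Lp : ℕ) : ℤ) = (L : ℤ) + 1 := by rw [hLp]; push_cast; ring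
    omega
  have hbwin : ∀ j : ℤ, |j| ≤ (L : ℤ) → bstar j = zh j := by
    intro j hj
    obtain ⟨h1, h2⟩ := abs_le.mp hj
    have hneg : j + -((p*Lp : ℕ) : ℤ) < 0 := by omega
    calc bstar j = η3 (j + -((p*Lp : ℕ) : ℤ)) := rfl
      _ = SS ((p*Lp : ℕ) : ℤ) zh (j + -((p*Lp : ℕ) : ℤ)) := hη3past _ hneg
      _ = zh (j + -((p*Lp : ℕ) : ℤ) + ((p*Lp : ℕ) : ℤ)) := rfl
      _ = zh j := feq zh (by ring)
  have hbfut : ∀ t : ℤ, 0 ≤ t → bstar (((p*(Lp + m2) : ℕ) : ℤ) + t) = z t := by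
    intro t ht
    calc bstar (((p*(Lp+m2) : ℕ) : ℤ) + t)
        = η3 (((p*(Lp+m2) : ℕ) : ℤ) + t + -((p*Lp : ℕ) : ℤ)) := rfl
      _ = η3 (((p*m2 : ℕ) : ℤ) + t) := feq η3 (by push_cast; ring)
      _ = z t := hη3fut t ht
  -- astar
  set s1 : ℤ := ((p*(m1 + Lp) : ℕ) : ℤ) with hs1
  have hs1nn : 0 ≤ s1 := by rw [hs1]; exact Int.natCast_nonneg _
  set astar : ℤ → A := SS s1 η1 with hastar
  have haD : astar ∈ D i := by
    apply SS_memD_zero hshift hη1D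
    rw [hs1]
    push_cast [ZMod.natCast_self]
    ring
  have hawin : ∀ j : ℤ, |j| ≤ (L : ℤ) → astar j = xh j := by
    intro j hj
    obtain ⟨h1, h2⟩ := abs_le.mp hj
    have e1 : j + s1 = ((p*m1 : ℕ) : ℤ) + (j + ((p*Lp : ℕ) : ℤ)) := by
      rw [hs1]; push_cast; ring
    calc astar j = η1 (j + s1) := rfl
      _ = η1 (((p*m1 : ℕ) : ℤ) + (j + ((p*Lp : ℕ) : ℤ))) := feq η1 e1
      _ = SS (-((p*Lp : ℕ) : ℤ)) xh (j + ((p*Lp : ℕ) : ℤ)) := hη1fut _ (by omega)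
      _ = xh (j + ((p*Lp : ℕ) : ℤ) + -((p*Lp : ℕ) : ℤ)) := rfl
      _ = xh j := feq xh (by ring)
  -- choose n
  set n : ℕ := (2*N0 + M21 + L + 1) - (m1 + m2) with hn
  have hneq : m1 + m2 + n = 2*N0 + M21 + L + 1 := by omega
  have hnM : M21 ≤ n := by omega
  have hnL : L + 1 ≤ n := by omega
  obtain ⟨y, ⟨ζn, ⟨hζD, hζO2⟩, hζmap⟩, hyD, hyO1⟩ := hM21 n hnM
  have hyw : y = SS ((p*n : ℕ) : ℤ) ζn := by rw [← hζmap, iterate_shiftMap]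
  have hζwin : ∀ j : ℤ, |j| ≤ (L : ℤ) → ζn (((p*n : ℕ) : ℤ) + j) = xh j := by
    intro j hj
    have h1 := hyO1 j hj
    rw [hyw, SS_apply] at h1
    rw [show ((p*n : ℕ) : ℤ) + j = j + ((p*n : ℕ) : ℤ) by ring]
    exact h1
  -- hop 1
  obtain ⟨η2, hη2D, hη2past, hη2fut⟩ := rel_iff.mp (hunif astar haD ζn hζD hawin hζO2)
  set η4 : ℤ → A := SS (-s1) η2 with hη4
  have hη4D : η4 ∈ D i := by
    apply SS_memD_zero hshift hη2D
    rw [hs1]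
    push_cast [ZMod.natCast_self]
    ring
  have hη4past : ∀ j : ℤ, j < 0 → η4 j = x j := by
    intro j hj
    calc η4 j = η2 (j + -s1) := rfl
      _ = astar (j + -s1) := hη2past _ (by omega)
      _ = η1 (j + -s1 + s1) := rfl
      _ = η1 j := feq η1 (by ring)
      _ = x j := hη1past j hj
  have hη4fut : ∀ t : ℤ, 0 ≤ t → η4 (s1 + ((p*m0 : ℕ) : ℤ) + t) = ζn t := by
    intro t ht
    calc η4 (s1 + ((p*m0 : ℕ) : ℤ) + t) = η2 (s1 + ((p*m0 : ℕ) : ℤ) + t + -s1) := rfl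
      _ = η2 (((p*m0 : ℕ) : ℤ) + t) := feq η2 (by ring)
      _ = ζn t := hη2fut t ht
  -- a'
  set s2 : ℤ := s1 + ((p*m0 : ℕ) : ℤ) + ((p*n : ℕ) : ℤ) with hs2
  have hs2nn : 0 ≤ s2 := by
    rw [hs2]
    have h1 : (0:ℤ) ≤ ((p*m0 : ℕ) : ℤ) := Int.natCast_nonneg _
    have h2 : (0:ℤ) ≤ ((p*n : ℕ) : ℤ) := Int.natCast_nonneg _
    omega
  set aprime : ℤ → A := SS s2 η4 with haprime
  have haprimeD : aprime ∈ D i := by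
    apply SS_memD_zero hshift hη4D
    rw [hs2, hs1]
    push_cast [ZMod.natCast_self]
    ring
  have hpnL : (L : ℤ) + 1 ≤ ((p*n : ℕ) : ℤ) := by
    have h1 : n ≤ p * n := Nat.le_mul_of_pos_left _ hp
    have h2 : ((n : ℕ) : ℤ) ≤ ((p*n : ℕ) : ℤ) := by exact_mod_cast h1
    have h3 : (L : ℤ) + 1 ≤ ((n : ℕ) : ℤ) := by exact_mod_cast hnL
    omega
  have haprimewin : ∀ j : ℤ, |j| ≤ (L : ℤ) → aprime j = xh j := by
    intro j hj
    obtain ⟨h1, h2⟩ := abs_le.mp hj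
    calc aprime j = η4 (j + s2) := rfl
      _ = η4 (s1 + ((p*m0 : ℕ) : ℤ) + (((p*n : ℕ) : ℤ) + j)) := feq η4 (by rw [hs2]; ring)
      _ = ζn (((p*n : ℕ) : ℤ) + j) := hη4fut _ (by omega)
      _ = xh j := hζwin j hj
  -- hop 2
  obtain ⟨η5, hη5D, hη5past, hη5fut⟩ := rel_iff.mp (hunif aprime haprimeD bstar hbD haprimewin hbwin)
  rw [rel_iff]
  refine ⟨SS (-s2) η5, ?_, ?_, ?_⟩
  · apply SS_memD_zero hshift hη5D
    rw [hs2, hs1]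
    push_cast [ZMod.natCast_self]
    ring
  · intro j hj
    calc SS (-s2) η5 j = η5 (j + -s2) := rfl
      _ = aprime (j + -s2) := hη5past _ (by omega)
      _ = η4 (j + -s2 + s2) := rfl
      _ = η4 j := feq η4 (by ring)
      _ = x j := hη4past j hj
  · intro t ht
    have hneqZ : ((m1 : ℤ)) + (m2 : ℤ) + (n : ℤ) = 2*(N0 : ℤ) + (M21 : ℤ) + (L : ℤ) + 1 := by
      exact_mod_cast hneq
    have harg : ((p*(2*m0 + 2*Lp + 2*N0 + M21 + L + 1) : ℕ) : ℤ) + t + -s2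
        = ((p*m0 : ℕ) : ℤ) + (((p*(Lp + m2) : ℕ) : ℤ) + t) := by
      rw [hs2, hs1, hLp]
      push_cast
      linear_combination (-(p : ℤ)) * hneqZ
    have hpos : (0:ℤ) ≤ ((p*(Lp + m2) : ℕ) : ℤ) + t := by
      have := Int.natCast_nonneg (p*(Lp + m2))
      omega
    calc SS (-s2) η5 (((p*(2*m0 + 2*Lp + 2*N0 + M21 + L + 1) : ℕ) : ℤ) + t)
        = η5 (((p*(2*m0 + 2*Lp + 2*N0 + M21 + L + 1) : ℕ) : ℤ) + t + -s2) := rfl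
      _ = η5 (((p*m0 : ℕ) : ℤ) + (((p*(Lp + m2) : ℕ) : ℤ) + t)) := feq η5 harg
      _ = bstar (((p*(Lp + m2) : ℕ) : ℤ) + t) := hη5fut _ hpos
      _ = z t := hbfut t ht

end ASSEMBLY

section MAIN
variable {A : Type*} [Fintype A] [TopologicalSpace A] [DiscreteTopology A]

theorem main_inst
    (X : Set (ℤ → A)) (hXne : X.Nonempty) (hXcl : IsClosed X) (hXinv : shiftMap '' X = X)
    (N0 : ℕ)
    (hAS : ∀ u v : List A, IsWordOf X u → IsWordOf X v →
      ∃ w : List A, w.length ≤ N0 ∧ IsWordOf X (u ++ w ++ v))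
    (p : ℕ) (hp : 0 < p) (D : ZMod p → Set (ℤ → A))
    (hDcl : ∀ j, IsClosed (D j)) (hDsub : ∀ j, D j ⊆ X)
    (hDcover : (⋃ j, D j) = X)
    (hshift : ∀ j, shiftMap '' D j = D (j + 1))
    (hmix : ∀ j, ∀ U V : Set (ℤ → A), IsOpen U → IsOpen V →
      (D j ∩ U).Nonempty → (D j ∩ V).Nonempty →
      ∃ N, ∀ n, N ≤ n → ((shiftMap^[p*n] '' (D j ∩ U)) ∩ (D j ∩ V)).Nonempty)
    (hDint : ∀ a b, a ≠ b → ∀ U : Set (ℤ → A), IsOpen U → X ∩ U ⊆ D a ∩ D b → X ∩ U = ∅)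
    (i : ZMod p) :
    ∃ N : ℕ, ∀ (k l : ℕ) (u v : List A), u.length = p * k → v.length = p * l →
      (∃ x ∈ D i, OccursAt x u 0) → (∃ x ∈ D i, OccursAt x v 0) →
      ∃ w : List A, w.length = p * N ∧ ∃ x ∈ D i, OccursAt x (u ++ w ++ v) 0 := by
  obtain ⟨c, r, hcD, pin⟩ := exists_pin hXne hXcl hp hDcl hDcover hshift hDint i
  have hDine : (D i).Nonempty := ⟨c, hcD⟩
  have hstep : ∀ x ∈ D i, ∀ z ∈ D i, ∃ m ≤ N0, Rel (D i) p m x z :=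
    fun x hx z hz => step1 hXinv hp hDsub hshift (hmix i) hAS hcD pin (hDcl i) hx hz
  obtain ⟨N, hN⟩ := assembly hp hshift (hmix i) (hDcl i) hDine hstep
  refine ⟨N, ?_⟩
  rintro k l u v hul hvl ⟨xu, hxuD, hxu⟩ ⟨yv, hyvD, hyv⟩
  have hxD : SS ((p*k : ℕ) : ℤ) xu ∈ D i := by
    apply SS_memD_zero hshift hxuD
    push_cast [ZMod.natCast_self]
    ring
  obtain ⟨η, hηD, hηpast, hηfut⟩ := rel_iff.mp (hN _ hxD yv hyvD)
  set ζ : ℤ → A := SS (-((p*k : ℕ) : ℤ)) η with hζ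
  have hζD : ζ ∈ D i := by
    apply SS_memD_zero hshift hηD
    push_cast [ZMod.natCast_self]
    ring
  refine ⟨win ζ ((p*k : ℕ) : ℤ) (p*N), by rw [win_length], ζ, hζD, ?_⟩
  have hu0 := occursAt_iff_nat.mp hxu
  have hv0 := occursAt_iff_nat.mp hyv
  have hoccu : OccursAt ζ u 0 := by
    rw [occursAt_iff_nat]
    intro mm hmm
    have hmm' : mm < p*k := hul ▸ hmm
    have hmmk : (mm : ℤ) < ((p*k : ℕ) : ℤ) := by exact_mod_cast hmm'
    have h1 : ζ (0 + (mm : ℤ)) = η ((mm : ℤ) - ((p*k : ℕ) : ℤ)) := by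
      rw [hζ, SS_apply]
      exact feq η (by ring)
    have h2 : η ((mm : ℤ) - ((p*k : ℕ) : ℤ))
        = SS ((p*k : ℕ) : ℤ) xu ((mm : ℤ) - ((p*k : ℕ) : ℤ)) :=
      hηpast _ (by omega)
    have h3 : SS ((p*k : ℕ) : ℤ) xu ((mm : ℤ) - ((p*k : ℕ) : ℤ)) = xu (0 + (mm : ℤ)) := by
      rw [SS_apply]
      exact feq xu (by ring)
    rw [h1, h2, h3]
    exact hu0 mm hmm
  have hoccw : OccursAt ζ (win ζ ((p*k : ℕ) : ℤ) (p*N)) ((p*k : ℕ) : ℤ) :=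
    occursAt_win.mpr (fun j _ _ => rfl)
  have hoccv : OccursAt ζ v (((p*k : ℕ) : ℤ) + ((p*N : ℕ) : ℤ)) := by
    rw [occursAt_iff_nat]
    intro mm hmm
    have h1 : ζ (((p*k : ℕ) : ℤ) + ((p*N : ℕ) : ℤ) + (mm : ℤ))
        = η (((p*N : ℕ) : ℤ) + (mm : ℤ)) := by
      rw [hζ, SS_apply]
      exact feq η (by ring)
    rw [h1, hηfut (mm : ℤ) (Int.natCast_nonneg _)]
    have := hv0 mm hmm
    rwa [zero_add] at this
  rw [occursAt_append]
  constructor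
  · rw [occursAt_append]
    refine ⟨hoccu, ?_⟩
    rw [show (0 : ℤ) + (u.length : ℤ) = ((p*k : ℕ) : ℤ) by rw [hul]; ring]
    exact hoccw
  · rw [show (0 : ℤ) + ((u ++ win ζ ((p*k : ℕ) : ℤ) (p*N)).length : ℤ)
        = ((p*k : ℕ) : ℤ) + ((p*N : ℕ) : ℤ) by
      rw [List.length_append, win_length, hul]; push_cast; ring]
    exact hoccv

end MAIN

end CCP

/-- If `X` is almost specified with cyclic cover
`D_0, …, D_{p-1}`, then each `(D_i, σ^p)` has the specification property. -/
theorem cyclicCover_has_specification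
    {A : Type*} [Fintype A] (X : Set (ℤ → A))
    (hX : IsShiftSpace X) (hAS : AlmostSpecified X)
    (p : ℕ) (D : ZMod p → Set (ℤ → A)) (hD : IsCyclicCover X p D) (i : ZMod p) :
    ∃ N : ℕ, ∀ (k l : ℕ) (u v : List A), u.length = p * k → v.length = p * l →
      (∃ x ∈ D i, OccursAt x u 0) → (∃ x ∈ D i, OccursAt x v 0) →
      ∃ w : List A, w.length = p * N ∧ ∃ x ∈ D i, OccursAt x (u ++ w ++ v) 0 := by
  letI : TopologicalSpace A := ⊥
  haveI : DiscreteTopology A := ⟨rfl⟩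
  obtain ⟨N0, hASn⟩ := hAS
  exact CCP.main_inst X hX.1 hX.2.1 hX.2.2 N0 hASn p hD.1 D
    (fun j => (hD.2.1 j).1) (fun j => (hD.2.1 j).2) hD.2.2.1 hD.2.2.2.1
    hD.2.2.2.2.1 hD.2.2.2.2.2 i
end

section
/- Let X be a synchronized system and φ : X → Y an open code to a shift space Y. Then φ is bi-continuing almost everywhere. -/
open Set Filter

section Aux

variable {A B : Type*}

/-- Shift by an arbitrary integer. -/
def shiftZ (k : ℤ) (x : ℤ → A) : ℤ → A := fun i => x (i + k)

/-- The word of `x` of length `n` starting at coordinate `i`. -/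
def word (x : ℤ → A) (i : ℤ) (n : ℕ) : List A := List.ofFn fun k : Fin n => x (i + k)

lemma shiftZ_shiftZ (k l : ℤ) (x : ℤ → A) : shiftZ k (shiftZ l x) = shiftZ (k + l) x := by
  funext i; simp [shiftZ, add_assoc]

lemma shiftZ_zero (x : ℤ → A) : shiftZ 0 x = x := by funext i; simp [shiftZ]

lemma shiftMap_eq_shiftZ : (shiftMap : (ℤ → A) → (ℤ → A)) = shiftZ 1 := rfl

lemma mem_of_shiftZ_aux {X : Set (ℤ → A)} (hinv : shiftMap '' X = X) :
    ∀ k : ℤ, ∀ x ∈ X, shiftZ k x ∈ X := by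
  have h1 : ∀ x ∈ X, shiftZ 1 x ∈ X := by
    intro x hx
    have : shiftMap x ∈ shiftMap '' X := Set.mem_image_of_mem _ hx
    rwa [hinv, shiftMap_eq_shiftZ] at this
  have hm1 : ∀ x ∈ X, shiftZ (-1) x ∈ X := by
    intro x hx
    rw [← hinv] at hx
    obtain ⟨w, hw, hwx⟩ := hx
    have : shiftZ (-1) x = w := by
      rw [← hwx, shiftMap_eq_shiftZ, shiftZ_shiftZ]
      simp [shiftZ_zero]
    rwa [this]
  intro k
  induction k using Int.induction_on with
  | zero => intro x hx; rwa [shiftZ_zero]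
  | succ n ih =>
      intro x hx
      have := h1 _ (ih x hx)
      rwa [shiftZ_shiftZ, add_comm] at this
  | pred n ih =>
      intro x hx
      have := hm1 _ (ih x hx)
      rw [shiftZ_shiftZ] at this
      convert this using 2
      ring

lemma occursAt_iff {x : ℤ → A} {u : List A} {i : ℤ} :
    OccursAt x u i ↔ ∀ k : ℕ, ∀ hk : k < u.length, x (i + k) = u[k] := by
  constructor
  · intro h k hk; exact h ⟨k, hk⟩
  · intro h k; exact h k k.2

lemma occursAt_shiftZ {x : ℤ → A} {u : List A} {i k : ℤ} :
    OccursAt (shiftZ k x) u i ↔ OccursAt x u (i + k) := by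
  simp only [occursAt_iff, shiftZ]
  constructor
  · intro h j hj; have := h j hj; rwa [show i + j + k = i + k + j by ring] at this
  · intro h j hj; have := h j hj; rwa [show i + k + j = i + j + k by ring] at this

lemma isWordOf_of_occursAt {X : Set (ℤ → A)} (hinv : shiftMap '' X = X)
    {x : ℤ → A} (hx : x ∈ X) {u : List A} {i : ℤ} (h : OccursAt x u i) :
    IsWordOf X u := by
  refine ⟨shiftZ i x, mem_of_shiftZ_aux hinv i x hx, ?_⟩
  rw [occursAt_shiftZ]
  simpa using h

@[simp] lemma word_length (x : ℤ → A) (i : ℤ) (n : ℕ) : (word x i n).length = n := by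
  simp [word]

lemma word_getElem (x : ℤ → A) (i : ℤ) (n : ℕ) (k : ℕ) (hk : k < (word x i n).length) :
    (word x i n)[k] = x (i + k) := by
  simp [word]

lemma occursAt_word_self (x : ℤ → A) (i : ℤ) (n : ℕ) : OccursAt x (word x i n) i := by
  rw [occursAt_iff]
  intro k hk
  rw [word_getElem]

lemma occursAt_word_iff {y x : ℤ → A} {i j : ℤ} {n : ℕ} :
    OccursAt y (word x j n) i ↔ ∀ k : ℕ, k < n → y (i + k) = x (j + k) := by
  rw [occursAt_iff]
  constructor
  · intro h k hk
    have := h k (by simpa using hk)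
    rwa [word_getElem] at this
  · intro h k hk
    rw [word_getElem]
    exact h k (by simpa using hk)

lemma occursAt_append {y : ℤ → A} {u w : List A} {i : ℤ} :
    OccursAt y (u ++ w) i ↔ OccursAt y u i ∧ OccursAt y w (i + u.length) := by
  simp only [occursAt_iff, List.length_append]
  constructor
  · intro h
    constructor
    · intro k hk
      have := h k (by omega)
      rwa [List.getElem_append_left hk] at this
    · intro k hk
      have := h (u.length + k) (by omega)
      rw [List.getElem_append_right (by omega)] at this
      simpa [add_assoc] using this
  · intro ⟨h1, h2⟩ k hk
    by_cases hku : k < u.length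
    · rw [List.getElem_append_left hku]; exact h1 k hku
    · rw [List.getElem_append_right (by omega)]
      have := h2 (k - u.length) (by omega)
      rw [show i + u.length + (k - u.length : ℕ) = i + k by push_cast; omega] at this
      exact this

lemma word_append (x : ℤ → A) (i : ℤ) (m n : ℕ) :
    word x i (m + n) = word x i m ++ word x (i + m) n := by
  apply List.ext_getElem
  · simp
  · intro k hk1 hk2
    rw [word_getElem]
    by_cases hkm : k < m
    · rw [List.getElem_append_left (by simpa using hkm), word_getElem]
    · rw [List.getElem_append_right (by simpa using hkm), word_getElem]
      congr 1
      push_cast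
      simp only [word_length]
      omega

lemma word_eq_of_occursAt {x : ℤ → A} {v : List A} {i : ℤ} (h : OccursAt x v i) :
    word x i v.length = v := by
  apply List.ext_getElem (by simp)
  intro k hk1 hk2
  rw [word_getElem]
  exact (occursAt_iff.1 h) k hk2

end Aux
section Aux2

variable {A B : Type*}

/-- Cluster point extraction in a compact set. -/
lemma exists_cluster {α : Type*} [TopologicalSpace α] {S : Set α} (hS : IsCompact S)
    (p : ℕ → α) (hp : ∀ n, p n ∈ S) :
    ∃ q ∈ S, ∀ U ∈ nhds q, ∃ᶠ n in Filter.atTop, p n ∈ U := by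
  have hle : Filter.map p Filter.atTop ≤ Filter.principal S :=
    Filter.le_principal_iff.2 (Filter.mem_map.2 (Filter.univ_mem' fun n => hp n))
  obtain ⟨q, hqS, hq⟩ := hS.exists_clusterPt hle
  exact ⟨q, hqS, fun U hU => mapClusterPt_iff_frequently.1 hq U hU⟩

end Aux2
section Aux3

variable {A B : Type*}

lemma phi_shiftZ {X : Set (ℤ → A)} {φ : (ℤ → A) → (ℤ → B)}
    (hinv : shiftMap '' X = X) (hc : ∀ x ∈ X, φ (shiftMap x) = shiftMap (φ x)) :
    ∀ k : ℤ, ∀ x ∈ X, φ (shiftZ k x) = shiftZ k (φ x) := by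
  have hdown : ∀ x ∈ X, φ (shiftZ (-1) x) = shiftZ (-1) (φ x) := by
    intro x hx
    have hmem : shiftZ (-1) x ∈ X := mem_of_shiftZ_aux hinv (-1) x hx
    have h1 : shiftMap (shiftZ (-1) x) = x := by
      rw [shiftMap_eq_shiftZ, shiftZ_shiftZ]; simp [shiftZ_zero]
    have h2 := hc _ hmem
    rw [h1] at h2
    have := congrArg (shiftZ (-1)) h2
    rw [shiftMap_eq_shiftZ, shiftZ_shiftZ] at this
    simpa [shiftZ_zero] using this.symm
  intro k
  induction k using Int.induction_on with
  | zero => intro x hx; simp [shiftZ_zero]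
  | succ n ih =>
      intro x hx
      have h1 : shiftZ ((n : ℤ) + 1) x = shiftMap (shiftZ n x) := by
        rw [shiftMap_eq_shiftZ, shiftZ_shiftZ, add_comm]
      rw [h1, hc _ (mem_of_shiftZ_aux hinv n x hx), ih x hx,
        shiftMap_eq_shiftZ, shiftZ_shiftZ, add_comm]
  | pred n ih =>
      intro x hx
      have h1 : shiftZ (-(n : ℤ) - 1) x = shiftZ (-1) (shiftZ (-n) x) := by
        rw [shiftZ_shiftZ]; ring_nf
      rw [h1, hdown _ (mem_of_shiftZ_aux hinv (-n) x hx), ih x hx, shiftZ_shiftZ]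
      ring_nf

/-- Right extension of words. -/
lemma word_extend_right {X : Set (ℤ → A)} (hinv : shiftMap '' X = X)
    {u : List A} (hu : IsWordOf X u) (n : ℕ) :
    ∃ w : List A, w.length = n ∧ IsWordOf X (u ++ w) := by
  obtain ⟨x, hx, hocc⟩ := hu
  refine ⟨word x u.length n, by simp, ⟨x, hx, ?_⟩⟩
  rw [occursAt_append]
  exact ⟨hocc, by simpa using occursAt_word_self x (u.length) n⟩

/-- Left extension of words. -/
lemma word_extend_left {X : Set (ℤ → A)} (hinv : shiftMap '' X = X)
    {u : List A} (hu : IsWordOf X u) (n : ℕ) :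
    ∃ w : List A, w.length = n ∧ IsWordOf X (w ++ u) := by
  obtain ⟨x, hx, hocc⟩ := hu
  refine ⟨word x (-(n : ℤ)) n, by simp, ?_⟩
  apply isWordOf_of_occursAt hinv hx (i := -(n : ℤ))
  rw [occursAt_append]
  constructor
  · exact occursAt_word_self x (-(n : ℤ)) n
  · simpa using hocc

/-- In a left transitive point, every word occurs arbitrarily far left. -/
lemma left_transitive_far {X : Set (ℤ → A)} (hinv : shiftMap '' X = X)
    {x : ℤ → A} (hx : IsLeftTransitive X x) {u : List A} (hu : IsWordOf X u) (N : ℤ) :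
    ∃ i : ℤ, i + u.length ≤ N ∧ OccursAt x u i := by
  obtain ⟨w, hwlen, hw⟩ := word_extend_right hinv hu (1 - N).toNat
  obtain ⟨i, hi, hocc⟩ := hx _ hw
  rw [occursAt_append] at hocc
  refine ⟨i, ?_, hocc.1⟩
  rw [List.length_append, hwlen] at hi
  omega

/-- In a right transitive point, every word occurs arbitrarily far right. -/
lemma right_transitive_far {X : Set (ℤ → A)} (hinv : shiftMap '' X = X)
    {x : ℤ → A} (hx : IsRightTransitive X x) {u : List A} (hu : IsWordOf X u) (N : ℤ) :
    ∃ i : ℤ, N ≤ i ∧ OccursAt x u i := by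
  obtain ⟨w, hwlen, hw⟩ := word_extend_left hinv hu N.toNat
  obtain ⟨i, hi, hocc⟩ := hx _ hw
  rw [occursAt_append] at hocc
  refine ⟨i + w.length, by omega, hocc.2⟩

end Aux3
section Aux4

variable {A B : Type*}

lemma mem_nhds_coord (q : ℤ → A) (i : ℤ) :
    {a : ℤ → A | a i = q i} ∈ @nhds _ (seqTop A) q := by
  letI : TopologicalSpace A := ⊥
  haveI : DiscreteTopology A := ⟨rfl⟩
  have hopen : IsOpen {a : ℤ → A | a i = q i} := by
    have : {a : ℤ → A | a i = q i} = (fun a : ℤ → A => a i) ⁻¹' {q i} := rfl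
    rw [this]
    exact (continuous_apply i).isOpen_preimage _ (isOpen_discrete _)
  exact hopen.mem_nhds rfl

lemma isCompact_of_isClosed_seq [Finite A] {X : Set (ℤ → A)}
    (h : @IsClosed _ (seqTop A) X) : @IsCompact _ (seqTop A) X := by
  letI : TopologicalSpace A := ⊥
  haveI : DiscreteTopology A := ⟨rfl⟩
  haveI : CompactSpace (ℤ → A) := by infer_instance
  exact @IsClosed.isCompact _ (seqTop A) _ this h

lemma isOpen_cylinder (W : List A) (t : ℤ) :
    @IsOpen _ (seqTop A) {q : ℤ → A | OccursAt q W t} := by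
  letI : TopologicalSpace A := ⊥
  haveI : DiscreteTopology A := ⟨rfl⟩
  have : {q : ℤ → A | OccursAt q W t} = ⋂ k : Fin W.length, {q | q (t + k) = W.get k} := by
    ext q; simp [OccursAt, Set.mem_iInter]
  rw [this]
  apply isOpen_iInter_of_finite
  intro k
  have : {q : ℤ → A | q (t + (k : ℤ)) = W.get k} =
      (fun q : ℤ → A => q (t + (k : ℤ))) ⁻¹' {W.get k} := rfl
  rw [this]
  exact (continuous_apply (t + (k : ℤ))).isOpen_preimage _ (isOpen_discrete _)

lemma isClosed_cylinder (W : List A) (t : ℤ) :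
    @IsClosed _ (seqTop A) {q : ℤ → A | OccursAt q W t} := by
  letI : TopologicalSpace A := ⊥
  haveI : DiscreteTopology A := ⟨rfl⟩
  have : {q : ℤ → A | OccursAt q W t} = ⋂ k : Fin W.length, {q | q (t + k) = W.get k} := by
    ext q; simp [OccursAt, Set.mem_iInter]
  rw [this]
  apply isClosed_iInter
  intro k
  have : {q : ℤ → A | q (t + (k : ℤ)) = W.get k} =
      (fun q : ℤ → A => q (t + (k : ℤ))) ⁻¹' {W.get k} := rfl
  rw [this]
  exact IsClosed.preimage (continuous_apply (t + (k : ℤ))) (isClosed_discrete _)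

/-- Sliding block radius. -/
lemma exists_radius [Finite A] [Finite B] {X : Set (ℤ → A)}
    {φ : (ℤ → A) → (ℤ → B)}
    (hXc : @IsClosed _ (seqTop A) X)
    (hcont : @ContinuousOn _ _ (seqTop A) (seqTop B) φ X) :
    ∃ r : ℕ, ∀ w ∈ X, ∀ w' ∈ X, (∀ j : ℤ, |j| ≤ (r : ℤ) → w j = w' j) → φ w 0 = φ w' 0 := by
  letI : TopologicalSpace A := ⊥
  letI : TopologicalSpace B := ⊥
  haveI : DiscreteTopology A := ⟨rfl⟩
  haveI : DiscreteTopology B := ⟨rfl⟩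
  by_contra hcon
  push_neg at hcon
  choose w hw w' hw' hagree hne using hcon
  have hXCompact : IsCompact X := isCompact_of_isClosed_seq hXc
  have hprod : IsCompact (X ×ˢ X) := hXCompact.prod hXCompact
  obtain ⟨⟨q1, q2⟩, hq, hcl⟩ := exists_cluster hprod (fun r => (w r, w' r))
    (fun r => ⟨hw r, hw' r⟩)
  have hq1 : q1 ∈ X := hq.1
  have heq : q1 = q2 := by
    funext i
    have hU : ({a : ℤ → A | a i = q1 i} ×ˢ {a : ℤ → A | a i = q2 i}) ∈ nhds (q1, q2) := by
      rw [nhds_prod_eq]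
      exact Filter.prod_mem_prod (mem_nhds_coord q1 i) (mem_nhds_coord q2 i)
    have := (hcl _ hU).and_eventually (Filter.eventually_ge_atTop i.natAbs)
    obtain ⟨r, hr, hri⟩ := this.exists
    have hai := hagree r i (by rw [Int.abs_eq_natAbs]; exact_mod_cast hri)
    calc q1 i = w r i := hr.1.symm
    _ = w' r i := hai
    _ = q2 i := hr.2
  subst heq
  -- continuity at q1
  have hcontAt := hcont q1 hq1
  have hnb : {b : ℤ → B | b 0 = φ q1 0} ∈ nhds (φ q1) := mem_nhds_coord (φ q1) 0
  have hpre : {a : ℤ → A | φ a 0 = φ q1 0} ∈ nhdsWithin q1 X := hcontAt hnb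
  rw [mem_nhdsWithin] at hpre
  obtain ⟨O, hOopen, hqO, hOsub⟩ := hpre
  have hU : O ×ˢ O ∈ nhds (q1, q1) := by
    rw [nhds_prod_eq]
    exact Filter.prod_mem_prod (hOopen.mem_nhds hqO) (hOopen.mem_nhds hqO)
  obtain ⟨r, hr1, hr2⟩ := (hcl _ hU).exists
  exact hne r (by
    have e1 : φ (w r) 0 = φ q1 0 := hOsub ⟨hr1, hw r⟩
    have e2 : φ (w' r) 0 = φ q1 0 := hOsub ⟨hr2, hw' r⟩
    rw [e1, e2])

end Aux4
section Aux5

variable {A B : Type*}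

lemma radius_spec {X : Set (ℤ → A)} {φ : (ℤ → A) → (ℤ → B)}
    (hinv : shiftMap '' X = X) (hc : ∀ x ∈ X, φ (shiftMap x) = shiftMap (φ x))
    {r : ℕ} (hr : ∀ w ∈ X, ∀ w' ∈ X, (∀ j : ℤ, |j| ≤ (r : ℤ) → w j = w' j) → φ w 0 = φ w' 0) :
    ∀ i : ℤ, ∀ w ∈ X, ∀ w' ∈ X, (∀ j : ℤ, |j - i| ≤ (r : ℤ) → w j = w' j) → φ w i = φ w' i := by
  intro i w hw w' hw' hagree
  have h1 : φ (shiftZ i w) 0 = φ w i := by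
    rw [phi_shiftZ hinv hc i w hw]
    show φ w (0 + i) = φ w i
    rw [zero_add]
  have h2 : φ (shiftZ i w') 0 = φ w' i := by
    rw [phi_shiftZ hinv hc i w' hw']
    show φ w' (0 + i) = φ w' i
    rw [zero_add]
  rw [← h1, ← h2]
  apply hr _ (mem_of_shiftZ_aux hinv i w hw) _ (mem_of_shiftZ_aux hinv i w' hw')
  intro j hj
  show w (j + i) = w' (j + i)
  exact hagree (j + i) (by rw [add_sub_cancel_right]; exact hj)

lemma exists_limit_in [Finite A] {X : Set (ℤ → A)}
    (hXc : @IsClosed _ (seqTop A) X) (p : ℕ → ℤ → A) (hp : ∀ n, p n ∈ X) :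
    ∃ q ∈ X, ∀ i : ℤ, ∀ N : ℕ, ∃ n, N ≤ n ∧ p n i = q i := by
  obtain ⟨q, hqX, hcl⟩ := @exists_cluster _ (seqTop A) _ (isCompact_of_isClosed_seq hXc) p hp
  refine ⟨q, hqX, fun i N => ?_⟩
  have := (hcl _ (mem_nhds_coord q i)).and_eventually (Filter.eventually_ge_atTop N)
  obtain ⟨n, hn1, hn2⟩ := this.exists
  exact ⟨n, hn2, hn1⟩

lemma agree_of_occursAt_word {y x : ℤ → A} {j : ℤ} {n : ℕ}
    (h : OccursAt y (word x j n) j) : ∀ i : ℤ, j ≤ i → i < j + n → y i = x i := by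
  intro i h1 h2
  have := (occursAt_word_iff.1 h) (i - j).toNat (by omega)
  rwa [show j + ((i - j).toNat : ℤ) = i by omega] at this

/-- Splicing across a synchronizing word occurring at the same position in both points. -/
lemma exists_splice [Finite A] {X : Set (ℤ → A)} (hX : IsShiftSpace X)
    {v : List A} (hsyn : IsSynchronizingWord X v) {x z : ℤ → A} (hx : x ∈ X) (hz : z ∈ X)
    {α : ℤ} (hxv : OccursAt x v α) (hzv : OccursAt z v α) :
    ∃ p ∈ X, (∀ i : ℤ, i < α + v.length → p i = x i) ∧ (∀ i : ℤ, α ≤ i → p i = z i) := by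
  have hinv := hX.2.2
  have hxz : ∀ i : ℤ, α ≤ i → i < α + v.length → x i = z i := by
    intro i h1 h2
    exact agree_of_occursAt_word
      (show OccursAt x (word z α v.length) α by
        rw [word_eq_of_occursAt hzv]; exact hxv) i h1 h2
  have key : ∀ n : ℕ, ∃ pn ∈ X,
      (∀ i : ℤ, α - n ≤ i → i < α + v.length → pn i = x i) ∧
      (∀ i : ℤ, α + v.length ≤ i → i < α + v.length + n → pn i = z i) := by
    intro n
    have huv : word x (α - n) n ++ v = word x (α - n) (n + v.length) := by
      rw [word_append, show α - n + (n : ℤ) = α by ring, word_eq_of_occursAt hxv]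
    have hvw : v ++ word z (α + v.length) n = word z α (v.length + n) := by
      rw [word_append, word_eq_of_occursAt hzv]
    have h1 : IsWordOf X (word x (α - n) n ++ v) := by
      rw [huv]
      exact isWordOf_of_occursAt hinv hx (occursAt_word_self x (α - n) (n + v.length))
    have h2 : IsWordOf X (v ++ word z (α + v.length) n) := by
      rw [hvw]
      exact isWordOf_of_occursAt hinv hz (occursAt_word_self z α (v.length + n))
    have h3 : IsWordOf X (word x (α - n) n ++ v ++ word z (α + v.length) n) :=
      hsyn.2 _ _ h1 h2
    obtain ⟨ξ, hξ, hocc⟩ := h3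
    refine ⟨shiftZ ((n : ℤ) - α) ξ, mem_of_shiftZ_aux hinv _ _ hξ, ?_⟩
    have hocc2 : OccursAt (shiftZ ((n : ℤ) - α) ξ)
        (word x (α - n) n ++ v ++ word z (α + v.length) n) (α - n) := by
      rw [occursAt_shiftZ, show α - (n : ℤ) + ((n : ℤ) - α) = 0 by ring]
      exact hocc
    rw [occursAt_append] at hocc2
    obtain ⟨ho1, ho2⟩ := hocc2
    rw [huv] at ho1
    constructor
    · intro i hi1 hi2
      refine agree_of_occursAt_word ho1 i hi1 ?_
      push_cast
      omega
    · intro i hi1 hi2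
      have hbase : α - (n : ℤ) + ((word x (α - n) n ++ v).length : ℤ) = α + v.length := by
        push_cast [List.length_append, word_length]
        ring
      rw [hbase] at ho2
      exact agree_of_occursAt_word ho2 i hi1 (by push_cast; omega)
  choose pn hpnX hpnx hpnz using key
  obtain ⟨q, hqX, hq⟩ := exists_limit_in hX.2.1 pn hpnX
  refine ⟨q, hqX, ?_, ?_⟩
  · intro i hi
    obtain ⟨n, hn1, hn2⟩ := hq i (α - i).toNat
    rw [← hn2]
    exact hpnx n i (by omega) hi
  · intro i hi
    by_cases hiv : i < α + v.length
    · obtain ⟨n, hn1, hn2⟩ := hq i (α - i).toNat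
      rw [← hn2, hpnx n i (by omega) hiv]
      exact hxz i hi hiv
    · obtain ⟨n, hn1, hn2⟩ := hq i (i - α - v.length + 1).toNat
      rw [← hn2]
      exact hpnz n i (by omega) (by omega)

end Aux5
section Aux6

variable {A B : Type*}

lemma open_lift [Finite A] [Finite B] {X : Set (ℤ → A)} {Y : Set (ℤ → B)}
    {φ : (ℤ → A) → (ℤ → B)} (hX : IsShiftSpace X) (hY : IsShiftSpace Y)
    (hφ : IsCode X Y φ) (hopen : IsOpenCode X Y φ) (W : List A) :
    ∃ m : ℕ, ∀ t : ℤ, ∀ y ∈ Y,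
      (∃ x0 ∈ X, OccursAt x0 W t ∧ ∀ i : ℤ, |i - t| ≤ (m : ℤ) → y i = φ x0 i) →
      ∃ z ∈ X, OccursAt z W t ∧ φ z = y := by
  letI : TopologicalSpace A := ⊥
  letI : TopologicalSpace B := ⊥
  haveI : DiscreteTopology A := ⟨rfl⟩
  haveI : DiscreteTopology B := ⟨rfl⟩
  obtain ⟨V, hVopen, hVeq⟩ := hopen _ (isOpen_cylinder W 0)
  set C0 : Set (ℤ → A) := {q | OccursAt q W 0} with hC0
  set K : Set (ℤ → B) := φ '' (X ∩ C0) with hK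
  have hXC0closed : IsClosed (X ∩ C0) := hX.2.1.inter (isClosed_cylinder W 0)
  have hXC0cpt : IsCompact (X ∩ C0) := isCompact_of_isClosed_seq hXC0closed
  have hKcpt : IsCompact K := hXC0cpt.image_of_continuousOn
    ((hφ.2.1).mono Set.inter_subset_left)
  have hKsub : K ⊆ V := by
    rw [hVeq]; exact Set.inter_subset_right
  -- uniform radius at the standard position
  have huniform : ∃ m : ℕ, ∀ y' ∈ Y,
      (∃ kk ∈ K, ∀ i : ℤ, |i| ≤ (m : ℤ) → y' i = kk i) → y' ∈ K := by
    by_contra hcon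
    push_neg at hcon
    have hcon' : ∀ m : ℕ, ∃ y', ∃ kk, y' ∈ Y ∧ kk ∈ K ∧
        (∀ i : ℤ, |i| ≤ (m : ℤ) → y' i = kk i) ∧ y' ∉ K := by
      intro m
      obtain ⟨y', hy', ⟨kk, hkk, hag⟩, hnot⟩ := hcon m
      exact ⟨y', kk, hy', hkk, hag, hnot⟩
    choose ym kkm hymY hkkm hagreem hnotm using hcon'
    have hymYV : ∀ m, ym m ∈ Y ∩ Vᶜ := by
      intro m
      refine ⟨hymY m, fun hmem => hnotm m ?_⟩
      rw [hVeq]; exact ⟨hymY m, hmem⟩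
    have hYVcpt : IsCompact (Y ∩ Vᶜ) :=
      isCompact_of_isClosed_seq (hY.2.1.inter hVopen.isClosed_compl)
    have hScpt : IsCompact ((Y ∩ Vᶜ) ×ˢ K) := hYVcpt.prod hKcpt
    obtain ⟨⟨q1, q2⟩, hqS, hcl⟩ := exists_cluster hScpt (fun m => (ym m, kkm m))
      (fun m => ⟨hymYV m, hkkm m⟩)
    have heq : q1 = q2 := by
      funext i
      have hU : ({a : ℤ → B | a i = q1 i} ×ˢ {a : ℤ → B | a i = q2 i}) ∈ nhds (q1, q2) := by
        rw [nhds_prod_eq]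
        exact Filter.prod_mem_prod (mem_nhds_coord q1 i) (mem_nhds_coord q2 i)
      have := (hcl _ hU).and_eventually (Filter.eventually_ge_atTop i.natAbs)
      obtain ⟨m, hm, hmi⟩ := this.exists
      have hai := hagreem m i (by rw [Int.abs_eq_natAbs]; exact_mod_cast hmi)
      calc q1 i = ym m i := hm.1.symm
      _ = kkm m i := hai
      _ = q2 i := hm.2
    have hq2V : q2 ∈ V := hKsub hqS.2
    rw [← heq] at hq2V
    exact hqS.1.2 hq2V
  obtain ⟨m, hm⟩ := huniform
  refine ⟨m, fun t y hyY ⟨x0, hx0X, hx0W, hagree⟩ => ?_⟩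
  have hy0Y : shiftZ t y ∈ Y := mem_of_shiftZ_aux hY.2.2 t y hyY
  have hx0'X : shiftZ t x0 ∈ X := mem_of_shiftZ_aux hX.2.2 t x0 hx0X
  have hx0'W : OccursAt (shiftZ t x0) W 0 := by
    rw [occursAt_shiftZ, zero_add]; exact hx0W
  have hkkK : φ (shiftZ t x0) ∈ K := ⟨shiftZ t x0, ⟨hx0'X, hx0'W⟩, rfl⟩
  have hy0K : shiftZ t y ∈ K := by
    apply hm _ hy0Y
    refine ⟨φ (shiftZ t x0), hkkK, fun i hi => ?_⟩
    rw [phi_shiftZ hX.2.2 hφ.2.2 t x0 hx0X]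
    show y (i + t) = φ x0 (i + t)
    exact hagree (i + t) (by rw [add_sub_cancel_right]; exact hi)
  obtain ⟨z0, ⟨hz0X, hz0W⟩, hz0φ⟩ := hy0K
  refine ⟨shiftZ (-t) z0, mem_of_shiftZ_aux hX.2.2 (-t) z0 hz0X, ?_, ?_⟩
  · rw [occursAt_shiftZ, show t + -t = 0 by ring]
    exact hz0W
  · rw [phi_shiftZ hX.2.2 hφ.2.2 (-t) z0 hz0X, hz0φ, shiftZ_shiftZ,
      show -t + t = 0 by ring, shiftZ_zero]

end Aux6

/-- An open code from a synchronized system is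
bi-continuing almost everywhere. -/
theorem open_from_synchronized_is_bicontinuing_ae
    {A B : Type*} [Fintype A] [Fintype B]
    (X : Set (ℤ → A)) (Y : Set (ℤ → B)) (φ : (ℤ → A) → (ℤ → B))
    (hX : IsShiftSpace X) (hsync : IsSynchronizedSystem X)
    (hY : IsShiftSpace Y) (hφ : IsCode X Y φ) (hopen : IsOpenCode X Y φ) :
    IsRightContinuingAE X Y φ ∧ IsLeftContinuingAE X Y φ := by
  obtain ⟨hirr, v, hv⟩ := hsync
  have hinv := hX.2.2
  obtain ⟨r, hr0⟩ := exists_radius hX.2.1 hφ.2.1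
  have hrad := radius_spec hinv hφ.2.2 hr0
  set R : ℕ := 2 * r with hR
  constructor
  · -- right continuing a.e.
    rintro x hxX hxlt y hyY ⟨M, hM⟩
    obtain ⟨a, -, hva⟩ := left_transitive_far hinv hxlt hv.1 0
    set L : ℕ := R + v.length + R with hL
    have hWx : OccursAt x (word x (a - (R : ℤ)) L) (a - (R : ℤ)) :=
      occursAt_word_self x (a - (R : ℤ)) L
    have hWword : IsWordOf X (word x (a - (R : ℤ)) L) :=
      isWordOf_of_occursAt hinv hxX hWx
    obtain ⟨m, hm⟩ := open_lift hX hY hφ hopen (word x (a - (R : ℤ)) L)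
    obtain ⟨t1, ht1, hWt1⟩ := left_transitive_far hinv hxlt hWword (M - m)
    rw [word_length] at ht1
    -- lift y over the far-left occurrence of W
    obtain ⟨z, hzX, hzW, hzφ⟩ := hm t1 y hyY ⟨x, hxX, hWt1, by
      intro i hi
      have hi' := (abs_le.1 hi).2
      exact (hM i (by omega)).symm⟩
    -- v occurs at t1 + R in both x and z
    have hxv' : OccursAt x v (t1 + (R : ℤ)) := by
      rw [occursAt_iff]
      intro k hk
      have h1 := occursAt_word_iff.1 hWt1 (R + k) (by omega)
      have h2 := occursAt_iff.1 hva k hk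
      push_cast at h1
      rw [show t1 + (R : ℤ) + k = t1 + ((R : ℤ) + k) by ring, h1,
        show a - (R : ℤ) + ((R : ℤ) + k) = a + k by ring]
      exact h2
    have hzv' : OccursAt z v (t1 + (R : ℤ)) := by
      rw [occursAt_iff]
      intro k hk
      have h1 := occursAt_word_iff.1 hzW (R + k) (by omega)
      have h2 := occursAt_iff.1 hva k hk
      push_cast at h1
      rw [show t1 + (R : ℤ) + k = t1 + ((R : ℤ) + k) by ring, h1,
        show a - (R : ℤ) + ((R : ℤ) + k) = a + k by ring]
      exact h2
    have hzx : ∀ i : ℤ, t1 ≤ i → i < t1 + (L : ℤ) → z i = x i := by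
      intro i hi1 hi2
      have h1 := occursAt_word_iff.1 hzW (i - t1).toNat (by omega)
      have h2 := occursAt_word_iff.1 hWt1 (i - t1).toNat (by omega)
      rw [show t1 + ((i - t1).toNat : ℤ) = i by omega] at h1 h2
      rw [h1, ← h2]
    obtain ⟨p, hpX, hpx, hpz⟩ := exists_splice hX hv hxX hzX hxv' hzv'
    have hpx_ext : ∀ i : ℤ, i < t1 + (L : ℤ) → p i = x i := by
      intro i hi
      by_cases hiv : i < t1 + (R : ℤ) + v.length
      · exact hpx i hiv
      · rw [hpz i (by omega)]
        exact hzx i (by omega) hi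
    refine ⟨p, hpX, ⟨t1 + (R : ℤ) - 1, fun i hi => hpx i (by omega)⟩, ?_⟩
    funext i
    by_cases hi : i ≤ t1 + (L : ℤ) - 1 - r
    · have h1 : φ p i = φ x i := by
        apply hrad i p hpX x hxX
        intro j hj
        have hj' := (abs_le.1 hj).2
        exact hpx_ext j (by omega)
      rw [h1]
      exact hM i (by omega)
    · have h1 : φ p i = φ z i := by
        apply hrad i p hpX z hzX
        intro j hj
        have hj' := (abs_le.1 hj).1
        exact hpz j (by omega)
      rw [h1, hzφ]
  · -- left continuing a.e.
    rintro x hxX hxrt y hyY ⟨M, hM⟩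
    obtain ⟨a, -, hva⟩ := right_transitive_far hinv hxrt hv.1 0
    set L : ℕ := R + v.length + R with hL
    have hWx : OccursAt x (word x (a - (R : ℤ)) L) (a - (R : ℤ)) :=
      occursAt_word_self x (a - (R : ℤ)) L
    have hWword : IsWordOf X (word x (a - (R : ℤ)) L) :=
      isWordOf_of_occursAt hinv hxX hWx
    obtain ⟨m, hm⟩ := open_lift hX hY hφ hopen (word x (a - (R : ℤ)) L)
    obtain ⟨t1, ht1, hWt1⟩ := right_transitive_far hinv hxrt hWword (M + m)
    obtain ⟨z, hzX, hzW, hzφ⟩ := hm t1 y hyY ⟨x, hxX, hWt1, by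
      intro i hi
      have hi' := (abs_le.1 hi).1
      exact (hM i (by omega)).symm⟩
    have hxv' : OccursAt x v (t1 + (R : ℤ)) := by
      rw [occursAt_iff]
      intro k hk
      have h1 := occursAt_word_iff.1 hWt1 (R + k) (by omega)
      have h2 := occursAt_iff.1 hva k hk
      push_cast at h1
      rw [show t1 + (R : ℤ) + k = t1 + ((R : ℤ) + k) by ring, h1,
        show a - (R : ℤ) + ((R : ℤ) + k) = a + k by ring]
      exact h2
    have hzv' : OccursAt z v (t1 + (R : ℤ)) := by
      rw [occursAt_iff]
      intro k hk
      have h1 := occursAt_word_iff.1 hzW (R + k) (by omega)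
      have h2 := occursAt_iff.1 hva k hk
      push_cast at h1
      rw [show t1 + (R : ℤ) + k = t1 + ((R : ℤ) + k) by ring, h1,
        show a - (R : ℤ) + ((R : ℤ) + k) = a + k by ring]
      exact h2
    have hzx : ∀ i : ℤ, t1 ≤ i → i < t1 + (L : ℤ) → z i = x i := by
      intro i hi1 hi2
      have h1 := occursAt_word_iff.1 hzW (i - t1).toNat (by omega)
      have h2 := occursAt_word_iff.1 hWt1 (i - t1).toNat (by omega)
      rw [show t1 + ((i - t1).toNat : ℤ) = i by omega] at h1 h2
      rw [h1, ← h2]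
    obtain ⟨p, hpX, hpz, hpx⟩ := exists_splice hX hv hzX hxX hzv' hxv'
    have hpx_right : ∀ i : ℤ, t1 ≤ i → p i = x i := by
      intro i hi
      by_cases hiv : t1 + (R : ℤ) ≤ i
      · exact hpx i hiv
      · rw [hpz i (by omega)]
        exact hzx i hi (by omega)
    refine ⟨p, hpX, ⟨t1 + (R : ℤ), fun i hi => hpx i hi⟩, ?_⟩
    funext i
    by_cases hi : t1 + (r : ℤ) ≤ i
    · have h1 : φ p i = φ x i := by
        apply hrad i p hpX x hxX
        intro j hj
        have hj' := (abs_le.1 hj).1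
        exact hpx_right j (by omega)
      rw [h1]
      exact hM i (by omega)
    · have h1 : φ p i = φ z i := by
        apply hrad i p hpX z hzX
        intro j hj
        have hj' := (abs_le.1 hj).2
        exact hpz j (by omega)
      rw [h1, hzφ]
end

section
/- Let S be a nonempty subset of the nonnegative integers and X(S) the S-gap shift. Then X(S) is almost specified if and only if the gaps between consecutive elements of S are bounded, i.e., there exists L such that for every s ∈ S that is not the maximum of S there exists t ∈ S with s < t ≤ s + L. -/
open Set Filter

namespace SGapAux

lemma sm_add_le {t : ℤ → ℤ} (ht : StrictMono t) (n : ℤ) (k : ℕ) :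
    t n + k ≤ t (n + k) := by
  induction k with
  | zero => simp
  | succ k ih =>
      have h1 : t (n + k) < t (n + k + 1) := ht (by omega)
      have e : ((k + 1 : ℕ) : ℤ) = (k : ℤ) + 1 := by push_cast; ring
      have e2 : n + ((k : ℤ) + 1) = n + k + 1 := by ring
      rw [e, e2]
      omega

lemma exists_crossing {t : ℤ → ℤ} (ht : StrictMono t) (c : ℤ) :
    ∃ n0 : ℤ, t n0 < c ∧ c ≤ t (n0 + 1) := by
  have hne : ∃ n, t n < c := by
    refine ⟨-((t 0 - c + 1).toNat : ℤ), ?_⟩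
    have h1 := sm_add_le ht (-((t 0 - c + 1).toNat : ℤ)) (t 0 - c + 1).toNat
    have e : (-((t 0 - c + 1).toNat : ℤ)) + ((t 0 - c + 1).toNat : ℤ) = 0 := by ring
    rw [e] at h1
    have h2 : (t 0 - c + 1 : ℤ) ≤ ((t 0 - c + 1).toNat : ℤ) := Int.self_le_toNat _
    omega
  have hbd : ∀ n : ℤ, t n < c → n ≤ ((c - t 0).toNat : ℤ) := by
    intro n hn
    by_contra h
    push_neg at h
    have h1 := sm_add_le ht 0 n.toNat
    rw [zero_add, Int.toNat_of_nonneg (by omega)] at h1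
    have h2 := Int.self_le_toNat (c - t 0)
    omega
  obtain ⟨n0, h1, h2⟩ := Int.exists_greatest_of_bdd ⟨((c - t 0).toNat : ℤ), hbd⟩ hne
  refine ⟨n0, h1, ?_⟩
  by_contra h
  push_neg at h
  have := h2 (n0 + 1) h
  omega

lemma gapfill {S : Set ℕ} (hS : S.Nonempty) {L : ℕ}
    (hgap : ∀ s ∈ S, (∃ t ∈ S, s < t) → ∃ t ∈ S, s < t ∧ t ≤ s + L)
    (b : ℕ) (hb : ∃ s ∈ S, b ≤ s) :
    ∃ g ∈ S, b ≤ g ∧ g ≤ b + max (sInf S) L := by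
  have hmax1 := le_max_left (sInf S) L
  have hmax2 := le_max_right (sInf S) L
  by_cases hc : b ≤ sInf S
  · exact ⟨sInf S, Nat.sInf_mem hS, hc, by omega⟩
  · push_neg at hc
    set T : Set ℕ := {s | s ∈ S ∧ s < b} with hT
    have hTne : T.Nonempty := ⟨sInf S, Nat.sInf_mem hS, hc⟩
    have hTbdd : BddAbove T := ⟨b, fun x hx => le_of_lt hx.2⟩
    have hmem := Nat.sSup_mem hTne hTbdd
    obtain ⟨s, hsS, hbs⟩ := hb
    obtain ⟨g, hgS, h1, h2⟩ := hgap _ hmem.1 ⟨s, hsS, lt_of_lt_of_le hmem.2 hbs⟩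
    have hge : b ≤ g := by
      by_contra h
      push_neg at h
      have : g ≤ sSup T := le_csSup hTbdd ⟨hgS, h⟩
      omega
    exact ⟨g, hgS, hge, by have := hmem.2; omega⟩

end SGapAux

namespace SGapAux

open Classical in
noncomputable def ofT (t : ℤ → ℤ) : ℤ → Bool := fun i =>
  if ∃ n, t n = i then true else false

lemma ofT_iff (t : ℤ → ℤ) (i : ℤ) : ofT t i = true ↔ ∃ n, t n = i := by
  by_cases h : ∃ n, t n = i <;> simp [ofT, h]

lemma sm_of_gaps {S : Set ℕ} {t : ℤ → ℤ}
    (h : ∀ n : ℤ, ∃ s ∈ S, t (n + 1) = t n + (s : ℤ) + 1) : StrictMono t :=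
  strictMono_int_of_lt_succ fun n => by
    obtain ⟨s, _, hs⟩ := h n
    omega

lemma ofT_mem {S : Set ℕ} {t : ℤ → ℤ}
    (h : ∀ n : ℤ, ∃ s ∈ S, t (n + 1) = t n + (s : ℤ) + 1) : ofT t ∈ GapConcat S :=
  ⟨t, sm_of_gaps h, h, fun i => ofT_iff t i⟩

lemma basept_gaps {S : Set ℕ} {m : ℕ} (hm : m ∈ S) (n : ℤ) :
    ∃ s ∈ S, (n + 1) * ((m : ℤ) + 1) = n * ((m : ℤ) + 1) + (s : ℤ) + 1 :=
  ⟨m, hm, by ring⟩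

lemma gapConcat_nonempty {S : Set ℕ} (hS : S.Nonempty) : (GapConcat S).Nonempty := by
  obtain ⟨m, hm⟩ := hS
  exact ⟨_, ofT_mem (t := fun n : ℤ => n * ((m : ℤ) + 1)) (fun n => basept_gaps hm n)⟩

lemma shift_image_gapConcat {S : Set ℕ} : shiftMap '' GapConcat S = GapConcat S := by
  ext x
  constructor
  · rintro ⟨y, ⟨t, ht, hg, hi⟩, rfl⟩
    refine ⟨fun n => t n - 1, fun a b hab => by dsimp only; have := ht hab; omega, ?_, ?_⟩
    · intro n
      obtain ⟨s, hs, he⟩ := hg n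
      exact ⟨s, hs, by dsimp only; omega⟩
    · intro i
      constructor
      · intro h
        obtain ⟨n, hn⟩ := (hi (i + 1)).1 h
        exact ⟨n, by dsimp only; omega⟩
      · rintro ⟨n, hn⟩
        dsimp only at hn
        exact (hi (i + 1)).2 ⟨n, by omega⟩
  · rintro ⟨t, ht, hg, hi⟩
    refine ⟨fun i => x (i - 1), ⟨fun n => t n + 1, fun a b hab => by dsimp only; have := ht hab; omega,
      ?_, ?_⟩, ?_⟩
    · intro n
      obtain ⟨s, hs, he⟩ := hg n
      exact ⟨s, hs, by dsimp only; omega⟩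
    · intro i
      constructor
      · intro h
        obtain ⟨n, hn⟩ := (hi (i - 1)).1 h
        exact ⟨n, by dsimp only; omega⟩
      · rintro ⟨n, hn⟩
        dsimp only at hn
        exact (hi (i - 1)).2 ⟨n, by omega⟩
    · funext i
      show x (i + 1 - 1) = x i
      norm_num

noncomputable def shiftHomeo (A : Type*) :
    @Homeomorph (ℤ → A) (ℤ → A) (seqTop A) (seqTop A) :=
  letI : TopologicalSpace A := ⊥
  letI : TopologicalSpace (ℤ → A) := seqTop A
  { toFun := shiftMap
    invFun := fun x i => x (i - 1)
    left_inv := fun x => funext fun i => by show x (i - 1 + 1) = x i; norm_num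
    right_inv := fun x => funext fun i => by show x (i + 1 - 1) = x i; norm_num
    continuous_toFun := continuous_pi fun i => continuous_apply (i + 1)
    continuous_invFun := continuous_pi fun i => continuous_apply (i - 1) }

lemma sgap_eq_closure {S : Set ℕ} (hS : S.Nonempty) :
    SGapShift S = @closure _ (seqTop Bool) (GapConcat S) := by
  letI : TopologicalSpace Bool := ⊥
  letI : TopologicalSpace (ℤ → Bool) := seqTop Bool
  have himg : shiftMap '' closure (GapConcat S) = closure (GapConcat S) := by
    have h1 := (shiftHomeo Bool).image_closure (GapConcat S)
    have h2 : ⇑(shiftHomeo Bool) = (shiftMap : (ℤ → Bool) → (ℤ → Bool)) := rfl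
    rw [h2] at h1
    rw [h1, shift_image_gapConcat]
  have hmem : IsShiftSpace (closure (GapConcat S)) ∧ GapConcat S ⊆ closure (GapConcat S) := by
    refine ⟨⟨(gapConcat_nonempty hS).mono subset_closure, isClosed_closure, himg⟩,
      subset_closure⟩
  apply subset_antisymm
  · exact Set.sInter_subset_of_mem hmem
  · intro x hx
    intro X hX
    exact closure_minimal hX.2 hX.1.2.1 hx

lemma isWordOf_sgap {S : Set ℕ} (hS : S.Nonempty) (u : List Bool) :
    IsWordOf (SGapShift S) u ↔ ∃ x ∈ GapConcat S, OccursAt x u 0 := by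
  letI : TopologicalSpace Bool := ⊥
  haveI : DiscreteTopology Bool := ⟨rfl⟩
  letI : TopologicalSpace (ℤ → Bool) := seqTop Bool
  rw [show IsWordOf (SGapShift S) u ↔ IsWordOf (closure (GapConcat S)) u from by
    rw [sgap_eq_closure hS]]
  constructor
  · rintro ⟨x, hx, hocc⟩
    set U : Set (ℤ → Bool) :=
      {y | ∀ k : Fin u.length, y (0 + ((k : ℕ) : ℤ)) = x (0 + ((k : ℕ) : ℤ))} with hU
    have hUopen : IsOpen U := by
      have : U = ⋂ k : Fin u.length,
          (fun y : ℤ → Bool => y (0 + ((k : ℕ) : ℤ))) ⁻¹' {x (0 + ((k : ℕ) : ℤ))} := by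
        ext y
        simp [hU, Set.mem_iInter]
      rw [this]
      exact isOpen_iInter_of_finite fun k =>
        (continuous_apply _).isOpen_preimage _ (isOpen_discrete _)
    have hxU : x ∈ U := fun k => rfl
    obtain ⟨g, hgU, hgG⟩ := mem_closure_iff.mp hx U hUopen hxU
    exact ⟨g, hgG, fun k => by rw [hgU k]; exact hocc k⟩
  · rintro ⟨x, hx, hocc⟩
    exact ⟨x, subset_closure hx, hocc⟩

end SGapAux

namespace SGapAux

lemma bridge_get (p q j : ℕ)
    (hj : j < (List.replicate p false ++ true :: List.replicate q false).length) :
    (List.replicate p false ++ true :: List.replicate q false)[j] = true ↔ j = p := by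
  rcases Nat.lt_trichotomy j p with h | h | h
  · rw [List.getElem_append_left (by simpa using h)]
    simp [List.getElem_replicate]
    omega
  · subst h
    rw [List.getElem_append_right (by simp)]
    simp
  · rw [List.getElem_append_right (by simp; omega)]
    rw [List.getElem_cons]
    split_ifs with h0
    · simp at h0 ⊢
      omega
    · simp
      omega

lemma occursAt_congr {A : Type*} {x : ℤ → A} {u : List A} {i i' : ℤ}
    (h : OccursAt x u i) (e : i = i') : OccursAt x u i' := e ▸ h

lemma occursAt_append {A : Type*} {x : ℤ → A} {u v : List A} {i : ℤ}
    (hu : OccursAt x u i) (hv : OccursAt x v (i + (u.length : ℤ))) :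
    OccursAt x (u ++ v) i := by
  intro k
  have hk := k.isLt
  rw [List.get_eq_getElem]
  simp only [List.length_append] at hk
  rcases Nat.lt_or_ge (k : ℕ) u.length with h | h
  · rw [List.getElem_append_left h]
    have := hu ⟨(k : ℕ), h⟩
    rw [List.get_eq_getElem] at this
    exact this
  · rw [List.getElem_append_right h]
    have := hv ⟨(k : ℕ) - u.length, by omega⟩
    rw [List.get_eq_getElem] at this
    have e : i + (u.length : ℤ) + ((((k : ℕ) - u.length : ℕ)) : ℤ) = i + ((k : ℕ) : ℤ) := by
      omega
    rw [e] at this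
    exact this

lemma glue {S : Set ℕ} {K : ℕ}
    (hfill : ∀ b : ℕ, (∃ s ∈ S, b ≤ s) → ∃ g ∈ S, b ≤ g ∧ g ≤ b + K)
    {u v : List Bool}
    (hu : ∃ x ∈ GapConcat S, OccursAt x u 0)
    (hv : ∃ y ∈ GapConcat S, OccursAt y v 0) :
    ∃ w : List Bool, w.length ≤ 2 * K + 1 ∧
      ∃ z ∈ GapConcat S, OccursAt z (u ++ w ++ v) 0 := by
  obtain ⟨x, ⟨tx, htx, hgx, hix⟩, hox⟩ := hu
  obtain ⟨y, ⟨ty, hty, hgy, hiy⟩, hoy⟩ := hv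
  set nu : ℤ := (u.length : ℤ) with hnu
  obtain ⟨n0, hn0l, hn0r⟩ := exists_crossing htx nu
  obtain ⟨s0, hs0S, hs0⟩ := hgx n0
  obtain ⟨g1, hg1S, hg1l, hg1u⟩ := hfill (nu - 1 - tx n0).toNat ⟨s0, hs0S, by omega⟩
  obtain ⟨m0, hm0l, hm0r⟩ := exists_crossing hty 0
  obtain ⟨s1, hs1S, hs1⟩ := hgy m0
  obtain ⟨g2, hg2S, hg2l, hg2u⟩ := hfill (ty (m0 + 1)).toNat ⟨s1, hs1S, by omega⟩
  set m1 : ℤ := m0 + 1 with hm1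
  set a : ℤ := ty m1 with ha
  set P1 : ℤ := tx n0 + (g1 : ℤ) + 1 with hP1
  set Q : ℤ := P1 + 1 + (g2 : ℤ) - a with hQdef
  have ha0 : 0 ≤ a := hm0r
  have hg1l' : nu - 1 - tx n0 ≤ (g1 : ℤ) := by omega
  have hg2l' : a ≤ (g2 : ℤ) := by omega
  have hPnu : nu ≤ P1 := by omega
  have hPQ : P1 < Q := by omega
  set p : ℕ := (P1 - nu).toNat with hp
  set q : ℕ := (Q - 1 - P1).toNat with hq
  set w : List Bool := List.replicate p false ++ true :: List.replicate q false with hw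
  have hwlen : w.length = p + (q + 1) := by simp [hw]
  have hwlenZ : (w.length : ℤ) = Q - nu := by rw [hwlen]; omega
  -- the spliced gap structure
  set t2 : ℤ → ℤ := fun n =>
    if n ≤ n0 then tx n else if n = n0 + 1 then P1 else ty (n - n0 - 2 + m1) + Q with ht2
  have ht2a : ∀ n ≤ n0, t2 n = tx n := by
    intro n hn
    rw [ht2]
    dsimp only
    rw [if_pos hn]
  have ht2b : t2 (n0 + 1) = P1 := by
    rw [ht2]
    dsimp only
    rw [if_neg (by omega), if_pos rfl]
  have ht2c : ∀ n, n0 + 2 ≤ n → t2 n = ty (n - n0 - 2 + m1) + Q := by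
    intro n hn
    rw [ht2]
    dsimp only
    rw [if_neg (by omega), if_neg (by omega)]
  have hgaps2 : ∀ n : ℤ, ∃ s ∈ S, t2 (n + 1) = t2 n + (s : ℤ) + 1 := by
    intro n
    rcases lt_trichotomy n n0 with h | h | h
    · obtain ⟨s, hs, he⟩ := hgx n
      exact ⟨s, hs, by rw [ht2a n (by omega), ht2a (n + 1) (by omega)]; omega⟩
    · subst h
      exact ⟨g1, hg1S, by rw [ht2a n (le_refl _), ht2b]⟩
    · rcases eq_or_lt_of_le (by omega : n0 + 1 ≤ n) with h2 | h2
      · refine ⟨g2, hg2S, ?_⟩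
        have e1 : t2 n = P1 := by rw [← h2, ht2b]
        have e2 : t2 (n + 1) = ty m1 + Q := by
          rw [ht2c (n + 1) (by omega)]
          have e : n + 1 - n0 - 2 + m1 = m1 := by omega
          rw [e]
        rw [e1, e2]
        omega
      · obtain ⟨s, hs, he⟩ := hgy (n - n0 - 2 + m1)
        refine ⟨s, hs, ?_⟩
        rw [ht2c n (by omega), ht2c (n + 1) (by omega)]
        have e : n + 1 - n0 - 2 + m1 = (n - n0 - 2 + m1) + 1 := by ring
        rw [e, he]
        ring
  set z : ℤ → Bool := ofT t2 with hz
  have hzG : z ∈ GapConcat S := ofT_mem hgaps2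
  have hiz : ∀ i, z i = true ↔ ∃ n, t2 n = i := fun i => ofT_iff t2 i
  have hmx := htx.monotone
  have hmy := hty.monotone
  have hxlow : ∀ n ≤ n0, tx n < nu := fun n hn => lt_of_le_of_lt (hmx hn) hn0l
  have hxhigh : ∀ n, n0 + 1 ≤ n → nu ≤ tx n := fun n hn => le_trans hn0r (hmx hn)
  have hylow : ∀ m ≤ m0, ty m < 0 := fun m hm => lt_of_le_of_lt (hmy hm) hm0l
  have hyhigh : ∀ m, m1 ≤ m → a ≤ ty m := fun m hm => hmy hm
  have ht2high : ∀ n, n0 + 2 ≤ n → Q ≤ t2 n := by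
    intro n hn
    rw [ht2c n hn]
    have := hyhigh (n - n0 - 2 + m1) (by omega)
    omega
  -- region A : i < nu
  have hA : ∀ i : ℤ, i < nu → z i = x i := by
    intro i hi
    rw [Bool.eq_iff_iff, hiz i, hix i]
    constructor
    · rintro ⟨n, hn⟩
      rcases le_or_gt n n0 with h | h
      · exact ⟨n, by rw [ht2a n h] at hn; exact hn⟩
      · rcases eq_or_lt_of_le (by omega : n0 + 1 ≤ n) with h2 | h2
        · rw [← h2, ht2b] at hn
          omega
        · have := ht2high n (by omega)
          omega
    · rintro ⟨n, hn⟩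
      rcases le_or_gt n n0 with h | h
      · exact ⟨n, by rw [ht2a n h]; exact hn⟩
      · have := hxhigh n (by omega)
        omega
  -- region B : nu ≤ i < Q
  have hB : ∀ i : ℤ, nu ≤ i → i < Q → (z i = true ↔ i = P1) := by
    intro i h1 h2
    rw [hiz i]
    constructor
    · rintro ⟨n, hn⟩
      rcases le_or_gt n n0 with h | h
      · have := hxlow n h
        rw [ht2a n h] at hn
        omega
      · rcases eq_or_lt_of_le (by omega : n0 + 1 ≤ n) with h3 | h3
        · rw [← h3, ht2b] at hn
          omega
        · have := ht2high n (by omega)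
          omega
    · rintro rfl
      exact ⟨n0 + 1, ht2b⟩
  -- region C : Q ≤ i
  have hC : ∀ i : ℤ, Q ≤ i → z i = y (i - Q) := by
    intro i hi
    rw [Bool.eq_iff_iff, hiz i, hiy (i - Q)]
    constructor
    · rintro ⟨n, hn⟩
      rcases le_or_gt n n0 with h | h
      · have := hxlow n h
        rw [ht2a n h] at hn
        omega
      · rcases eq_or_lt_of_le (by omega : n0 + 1 ≤ n) with h3 | h3
        · rw [← h3, ht2b] at hn
          omega
        · refine ⟨n - n0 - 2 + m1, ?_⟩
          rw [ht2c n (by omega)] at hn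
          omega
    · rintro ⟨m, hm⟩
      have hm1le : m1 ≤ m := by
        by_contra hcon
        push_neg at hcon
        have := hylow m (by omega)
        omega
      refine ⟨m - m1 + n0 + 2, ?_⟩
      rw [ht2c _ (by omega)]
      have e : m - m1 + n0 + 2 - n0 - 2 + m1 = m := by ring
      rw [e]
      omega
  -- occurrences
  have hoccu : OccursAt z u 0 := by
    intro k
    have hk := k.isLt
    rw [hA (0 + ((k : ℕ) : ℤ)) (by omega)]
    exact hox k
  have hoccw : OccursAt z w nu := by
    intro k
    have hk := k.isLt
    rw [List.get_eq_getElem, Bool.eq_iff_iff]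
    have hkZ : ((k : ℕ) : ℤ) < Q - nu := by omega
    rw [hB (nu + ((k : ℕ) : ℤ)) (by omega) (by omega)]
    have hk' : (k : ℕ) < (List.replicate p false ++ true :: List.replicate q false).length := by
      simp only [List.length_append, List.length_cons, List.length_replicate]
      omega
    have hbg := bridge_get p q (k : ℕ) hk'
    exact Iff.trans (by omega : (nu + ((k : ℕ) : ℤ) = P1) ↔ ((k : ℕ) = p)) hbg.symm
  have hoccv : OccursAt z v Q := by
    intro k
    rw [hC (Q + ((k : ℕ) : ℤ)) (by omega)]
    have e : Q + ((k : ℕ) : ℤ) - Q = 0 + ((k : ℕ) : ℤ) := by ring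
    rw [e]
    exact hoy k
  refine ⟨w, by rw [hwlen]; omega, z, hzG, ?_⟩
  apply occursAt_append
  · apply occursAt_append hoccu
    exact occursAt_congr hoccw (by omega)
  · apply occursAt_congr hoccv
    simp only [List.length_append]
    push_cast
    omega

end SGapAux

namespace SGapAux

lemma occursAt_append_left {A : Type*} {x : ℤ → A} {u v : List A} {i : ℤ}
    (h : OccursAt x (u ++ v) i) : OccursAt x u i := by
  intro k
  have := h ⟨(k : ℕ), by simp only [List.length_append]; omega⟩
  rw [List.get_eq_getElem] at this ⊢
  rw [List.getElem_append_left k.isLt] at this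
  exact this

lemma occursAt_append_right {A : Type*} {x : ℤ → A} {u v : List A} {i : ℤ}
    (h : OccursAt x (u ++ v) i) : OccursAt x v (i + (u.length : ℤ)) := by
  intro k
  have hk := k.isLt
  have := h ⟨u.length + (k : ℕ), by simp only [List.length_append]; omega⟩
  rw [List.get_eq_getElem] at this ⊢
  dsimp only at this
  rw [List.getElem_append_right (by omega)] at this
  simp only [Nat.add_sub_cancel_left] at this
  have e : i + (u.length : ℤ) + ((k : ℕ) : ℤ) = i + (((u.length + (k : ℕ) : ℕ)) : ℤ) := by
    push_cast
    ring
  rw [e]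
  exact this

lemma one_word {S : Set ℕ} {m : ℕ} (hm : m ∈ S) :
    ∃ x ∈ GapConcat S, OccursAt x [true] 0 := by
  refine ⟨_, ofT_mem (t := fun n : ℤ => n * ((m : ℤ) + 1)) (fun n => basept_gaps hm n), ?_⟩
  intro k
  have hk := k.isLt
  simp only [List.length_cons, List.length_nil] at hk
  have h0 : (k : ℕ) = 0 := by omega
  have e : (0 : ℤ) + ((k : ℕ) : ℤ) = 0 := by omega
  rw [e]
  have e2 : [true].get k = true := by
    have h5 := List.getElem_replicate (α := Bool) (a := true) (n := 1) (i := (k : ℕ))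
      (by simpa using k.isLt)
    rw [List.get_eq_getElem]
    exact h5
  rw [e2, ofT_iff]
  exact ⟨0, by norm_num⟩

lemma special_word {S : Set ℕ} {m s tg : ℕ} (hm : m ∈ S) (htg : tg ∈ S) (hst : s < tg) :
    ∃ x ∈ GapConcat S, OccursAt x (true :: List.replicate (s + 1) false) 0 := by
  set t : ℤ → ℤ := fun n =>
    if n ≤ 0 then n * ((m : ℤ) + 1) else (n - 1) * ((m : ℤ) + 1) + tg + 1 with ht
  have hta : ∀ n : ℤ, n ≤ 0 → t n = n * ((m : ℤ) + 1) := by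
    intro n hn
    rw [ht]
    dsimp only
    rw [if_pos hn]
  have htb : ∀ n : ℤ, 1 ≤ n → t n = (n - 1) * ((m : ℤ) + 1) + tg + 1 := by
    intro n hn
    rw [ht]
    dsimp only
    rw [if_neg (by omega)]
  have hgaps : ∀ n : ℤ, ∃ s' ∈ S, t (n + 1) = t n + (s' : ℤ) + 1 := by
    intro n
    rcases lt_trichotomy n 0 with h | h | h
    · refine ⟨m, hm, ?_⟩
      rw [hta n (by omega), hta (n + 1) (by omega)]
      ring
    · subst h
      refine ⟨tg, htg, ?_⟩
      have e01 : (0 : ℤ) + 1 = 1 := by norm_num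
      rw [e01, hta 0 (le_refl _), htb 1 (le_refl _)]
      ring
    · refine ⟨m, hm, ?_⟩
      rw [htb n (by omega), htb (n + 1) (by omega)]
      ring
  have hsm := sm_of_gaps hgaps
  refine ⟨ofT t, ofT_mem hgaps, ?_⟩
  intro k
  have hk := k.isLt
  simp only [List.length_cons, List.length_replicate] at hk
  rw [List.get_eq_getElem, List.getElem_cons]
  split_ifs with h0
  · have e : (0 : ℤ) + ((k : ℕ) : ℤ) = 0 := by omega
    rw [e, ofT_iff]
    exact ⟨0, by rw [hta 0 (le_refl _)]; ring⟩
  · rw [List.getElem_replicate, ← Bool.not_eq_true, ofT_iff]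
    rintro ⟨n, hn⟩
    rcases lt_trichotomy n 0 with h | h | h
    · rw [hta n (by omega)] at hn
      have h2 : n * ((m : ℤ) + 1) ≤ (-1) * ((m : ℤ) + 1) :=
        mul_le_mul_of_nonneg_right (by omega) (by positivity)
      have h3 : ((-1 : ℤ)) * ((m : ℤ) + 1) = -((m : ℤ) + 1) := by ring
      omega
    · subst h
      rw [hta 0 (le_refl _)] at hn
      simp at hn
      omega
    · have h1 : t 1 ≤ t n := hsm.monotone (by omega)
      rw [htb 1 (by omega)] at h1
      norm_num at h1
      omega

theorem main (S : Set ℕ) (hS : S.Nonempty) :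
    AlmostSpecified (SGapShift S) ↔
      ∃ L : ℕ, ∀ s ∈ S, (∃ t ∈ S, s < t) → ∃ t ∈ S, s < t ∧ t ≤ s + L := by
  obtain ⟨m, hm⟩ := hS
  have hS' : S.Nonempty := ⟨m, hm⟩
  constructor
  · rintro ⟨N, hN⟩
    refine ⟨N + 1, ?_⟩
    rintro s hs ⟨tg, htgS, hstg⟩
    obtain ⟨w, hwlen, hword⟩ := hN (true :: List.replicate (s + 1) false) [true]
      ((isWordOf_sgap hS' _).mpr (special_word hm htgS hstg))
      ((isWordOf_sgap hS' _).mpr (one_word hm))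
    obtain ⟨z, ⟨t, ht, hg, hi⟩, hocc⟩ := (isWordOf_sgap hS' _).mp hword
    have hocc1 : OccursAt z (true :: List.replicate (s + 1) false) 0 :=
      occursAt_append_left (occursAt_append_left hocc)
    have hoccLast := occursAt_append_right hocc
    -- z 0 = true
    have h0z : z 0 = true := by
      have := hocc1 ⟨0, by simp⟩
      rw [List.get_eq_getElem] at this
      simpa using this
    -- zeros in (0, s+1]
    have hzero : ∀ j : ℕ, 1 ≤ j → j ≤ s + 1 → z ((j : ℕ) : ℤ) = false := by
      intro j h1 h2
      have := hocc1 ⟨j, by simp only [List.length_cons, List.length_replicate]; omega⟩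
      rw [List.get_eq_getElem, List.getElem_cons] at this
      rw [dif_neg (by omega : ¬ j = 0), List.getElem_replicate] at this
      have e : (0 : ℤ) + ((j : ℕ) : ℤ) = ((j : ℕ) : ℤ) := by ring
      rw [e] at this
      exact this
    -- the 1 at the end
    set E : ℤ := (((true :: List.replicate (s + 1) false) ++ w).length : ℤ) with hE
    have hEval : E = (s : ℤ) + 2 + (w.length : ℤ) := by
      rw [hE]
      simp only [List.length_append, List.length_cons, List.length_replicate]
      push_cast
      ring
    have hlast : z E = true := by
      have := hoccLast ⟨0, by simp⟩
      rw [List.get_eq_getElem] at this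
      simpa using this
    obtain ⟨n0, hn0⟩ := (hi 0).1 h0z
    obtain ⟨n1, hn1⟩ := (hi E).1 hlast
    have hn01 : n0 < n1 := by
      rw [← ht.lt_iff_lt]
      omega
    have hmono : t (n0 + 1) ≤ t n1 := ht.monotone (by omega)
    obtain ⟨s', hs'S, he'⟩ := hg n0
    have hclaim : s < s' := by
      by_contra hcon
      push_neg at hcon
      have h1 : z (((s' + 1 : ℕ)) : ℤ) = true := (hi _).2 ⟨n0 + 1, by push_cast; omega⟩
      have h2 := hzero (s' + 1) (by omega) (by omega)
      push_cast at h1 h2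
      rw [h1] at h2
      simp at h2
    refine ⟨s', hs'S, hclaim, ?_⟩
    omega
  · rintro ⟨L, hL⟩
    refine ⟨2 * (max (sInf S) L) + 1, ?_⟩
    intro u v huW hvW
    obtain ⟨w, hwl, z, hzG, hocc⟩ := glue (K := max (sInf S) L)
      (fun b hb => gapfill hS' hL b hb)
      ((isWordOf_sgap hS' u).mp huW) ((isWordOf_sgap hS' v).mp hvW)
    exact ⟨w, hwl, (isWordOf_sgap hS' _).mpr ⟨z, hzG, hocc⟩⟩

end SGapAux


/-- The `S`-gap shift is almost specified iff the gaps
between consecutive elements of `S` are bounded. -/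
theorem sGapShift_almostSpecified_iff_bounded_gaps
    (S : Set ℕ) (hS : S.Nonempty) :
    AlmostSpecified (SGapShift S) ↔
      ∃ L : ℕ, ∀ s ∈ S, (∃ t ∈ S, s < t) → ∃ t ∈ S, s < t ∧ t ≤ s + L := by
  exact SGapAux.main S hS
end

section
/- Let S be a nonempty subset of the nonnegative integers and X(S) the S-gap shift. Then X(S) is mixing if and only if gcd{n + 1 : n ∈ S} = 1. -/
open Set Filter

section SGapHelpers

variable {S : Set ℕ}

/-- The shift of a gap concatenation is a gap concatenation. -/
lemma gapConcat_shift {x : ℤ → Bool} (hx : x ∈ GapConcat S) :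
    shiftMap x ∈ GapConcat S := by
  obtain ⟨t, ht, hgap, hone⟩ := hx
  refine ⟨fun n => t n - 1, fun a b h => by have := ht h; dsimp only; omega, ?_, ?_⟩
  · intro n; obtain ⟨s, hs, h⟩ := hgap n
    exact ⟨s, hs, by show t (n + 1) - 1 = t n - 1 + (s : ℤ) + 1; omega⟩
  · intro i
    show x (i + 1) = true ↔ ∃ n, t n - 1 = i
    rw [hone (i + 1)]
    constructor
    · rintro ⟨n, hn⟩; exact ⟨n, by omega⟩
    · rintro ⟨n, hn⟩; exact ⟨n, by omega⟩

/-- The inverse shift of a gap concatenation is a gap concatenation. -/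
lemma gapConcat_unshift {x : ℤ → Bool} (hx : x ∈ GapConcat S) :
    (fun i => x (i - 1)) ∈ GapConcat S := by
  obtain ⟨t, ht, hgap, hone⟩ := hx
  refine ⟨fun n => t n + 1, fun a b h => by have := ht h; dsimp only; omega, ?_, ?_⟩
  · intro n; obtain ⟨s, hs, h⟩ := hgap n
    exact ⟨s, hs, by show t (n + 1) + 1 = t n + 1 + (s : ℤ) + 1; omega⟩
  · intro i
    show x (i - 1) = true ↔ ∃ n, t n + 1 = i
    rw [hone (i - 1)]
    constructor
    · rintro ⟨n, hn⟩; exact ⟨n, by omega⟩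
    · rintro ⟨n, hn⟩; exact ⟨n, by omega⟩

/-- `GapConcat S` contains a point with a `1` at the origin. -/
lemma gapConcat_nonempty' (hS : S.Nonempty) :
    ∃ x ∈ GapConcat S, x 0 = true := by
  obtain ⟨s, hs⟩ := hS
  refine ⟨fun i => decide (((s : ℤ) + 1) ∣ i), ⟨fun n => n * ((s : ℤ) + 1), ?_, ?_, ?_⟩, by simp⟩
  · apply strictMono_int_of_lt_succ
    intro n
    show n * ((s : ℤ) + 1) < (n + 1) * ((s : ℤ) + 1)
    have h : (n + 1) * ((s : ℤ) + 1) = n * ((s : ℤ) + 1) + ((s : ℤ) + 1) := by ring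
    rw [h]; omega
  · intro n
    exact ⟨s, hs, by show (n + 1) * ((s : ℤ) + 1) = n * ((s : ℤ) + 1) + (s : ℤ) + 1; ring⟩
  · intro i
    show decide (((s : ℤ) + 1) ∣ i) = true ↔ ∃ n : ℤ, n * ((s : ℤ) + 1) = i
    rw [decide_eq_true_iff]
    constructor
    · rintro ⟨c, rfl⟩; exact ⟨c, by ring⟩
    · rintro ⟨n, rfl⟩; exact ⟨n, by ring⟩

lemma gapConcat_subset_sGapShift : GapConcat S ⊆ SGapShift S := by
  intro x hx
  rw [SGapShift, Set.mem_sInter]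
  intro X hX
  exact hX.2 hx

/-- Points that locally look like gap concatenations. -/
def LocalGap (S : Set ℕ) : Set (ℤ → Bool) :=
  { x | ∀ N : ℕ, ∃ y ∈ GapConcat S, ∀ i : ℤ, |i| ≤ (N : ℤ) → x i = y i }

lemma gapConcat_subset_localGap : GapConcat S ⊆ LocalGap S :=
  fun x hx => fun _ => ⟨x, hx, fun _ _ => rfl⟩

lemma isClosed_localGap : @IsClosed _ (seqTop Bool) (LocalGap S) := by
  constructor
  rw [@isOpen_iff_forall_mem_open _ (seqTop Bool)]
  intro x hx
  simp only [LocalGap, Set.mem_compl_iff, Set.mem_setOf_eq, not_forall] at hx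
  obtain ⟨N, hN⟩ := hx
  push_neg at hN
  refine ⟨{x' : ℤ → Bool | ∀ i : ℤ, |i| ≤ (N : ℤ) → x' i = x i}, ?_, ?_, fun i _ => rfl⟩
  · intro x' hx'
    simp only [Set.mem_compl_iff]
    intro hmem
    obtain ⟨y, hy, hagree⟩ := hmem N
    obtain ⟨i, hi, hne⟩ := hN y hy
    exact hne (by rw [← hagree i hi, hx' i hi])
  · have heq : {x' : ℤ → Bool | ∀ i : ℤ, |i| ≤ (N : ℤ) → x' i = x i} =
        ⋂ i ∈ Finset.Icc (-(N : ℤ)) (N : ℤ), (fun x' : ℤ → Bool => x' i) ⁻¹' {x i} := by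
      ext x'
      simp only [Set.mem_setOf_eq, Set.mem_iInter, Set.mem_preimage, Set.mem_singleton_iff,
        Finset.mem_Icc]
      constructor
      · intro h i hi; exact h i (by rw [abs_le]; omega)
      · intro h i hi; rw [abs_le] at hi; exact h i ⟨by omega, by omega⟩
    rw [heq]
    refine @isOpen_biInter_finset _ _ (seqTop Bool) _ _ ?_
    intro i _
    exact (@continuous_apply ℤ (fun _ => Bool) (fun _ => ⊥) i).isOpen_preimage _
      (@isOpen_discrete _ ⊥ (discreteTopology_bot Bool) _)

lemma isShiftSpace_localGap (hS : S.Nonempty) : IsShiftSpace (LocalGap S) := by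
  refine ⟨?_, isClosed_localGap, ?_⟩
  · obtain ⟨x, hx, -⟩ := gapConcat_nonempty' hS
    exact ⟨x, gapConcat_subset_localGap hx⟩
  · apply Set.Subset.antisymm
    · rintro _ ⟨x, hx, rfl⟩
      intro N
      obtain ⟨y, hy, hagree⟩ := hx (N + 1)
      refine ⟨shiftMap y, gapConcat_shift hy, fun i hi => ?_⟩
      show x (i + 1) = y (i + 1)
      exact hagree (i + 1) (by rw [abs_le] at hi ⊢; push_cast; omega)
    · intro x hx
      refine ⟨fun i => x (i - 1), ?_, by funext i; show x (i + 1 - 1) = x i; norm_num⟩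
      intro N
      obtain ⟨y, hy, hagree⟩ := hx (N + 1)
      refine ⟨fun i => y (i - 1), gapConcat_unshift hy, fun i hi => ?_⟩
      exact hagree (i - 1) (by rw [abs_le] at hi ⊢; push_cast; omega)

lemma sGapShift_subset_localGap (hS : S.Nonempty) : SGapShift S ⊆ LocalGap S :=
  Set.sInter_subset_of_mem ⟨isShiftSpace_localGap hS, gapConcat_subset_localGap⟩

/-- Every word of the `S`-gap shift occurs in a genuine gap concatenation. -/
lemma word_of_gapConcat (hS : S.Nonempty) {u : List Bool}
    (h : IsWordOf (SGapShift S) u) : ∃ x ∈ GapConcat S, OccursAt x u 0 := by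
  obtain ⟨x, hx, hocc⟩ := h
  obtain ⟨y, hy, hagree⟩ := sGapShift_subset_localGap hS hx u.length
  refine ⟨y, hy, fun k => ?_⟩
  rw [← hagree (0 + ((k : ℕ) : ℤ)) ?_]
  · exact hocc k
  · rw [abs_le]
    have := k.isLt
    omega

lemma strictMono_int_ge {t : ℤ → ℤ} (ht : StrictMono t) (k : ℕ) :
    t 0 + (k : ℤ) ≤ t (k : ℤ) := by
  induction k with
  | zero => simp
  | succ n ih =>
    have h := ht (show (n : ℤ) < (n : ℤ) + 1 by omega)
    push_cast
    push_cast at ih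
    omega

lemma strictMono_int_le {t : ℤ → ℤ} (ht : StrictMono t) (k : ℕ) :
    t (-(k : ℤ)) ≤ t 0 - (k : ℤ) := by
  induction k with
  | zero => simp
  | succ n ih =>
    have h := ht (show -((n : ℤ) + 1) < -(n : ℤ) by omega)
    push_cast
    push_cast at ih
    omega

/-- Splicing two gap concatenations at `1`s. -/
lemma gapConcat_splice {x y : ℤ → Bool} (hx : x ∈ GapConcat S) (hy : y ∈ GapConcat S)
    {p q : ℤ} (hp : x p = true) (hq : y q = true) :
    ∃ z ∈ GapConcat S, (∀ i ≤ p, z i = x i) ∧ (∀ i, p ≤ i → z i = y (i - p + q)) := by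
  obtain ⟨t, ht, hgap, hone⟩ := hx
  obtain ⟨r, hr, rgap, rone⟩ := hy
  obtain ⟨m, hm⟩ := (hone p).1 hp
  obtain ⟨m', hm'⟩ := (rone q).1 hq
  set z : ℤ → Bool := fun i => if i < p then x i else y (i - p + q) with hz
  set T : ℤ → ℤ := fun n => if n ≤ m then t n else r (n - m + m') - q + p with hT
  have hT1 : ∀ n ≤ m, T n = t n := fun n hn => if_pos hn
  have hT2 : ∀ n, m ≤ n → T n = r (n - m + m') - q + p := by
    intro n hn
    rcases eq_or_lt_of_le hn with h | h
    · rw [← h, hT1 m le_rfl, hm]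
      rw [show m - m + m' = m' by ring, hm']
      ring
    · exact if_neg (by omega)
  have Tgap : ∀ n : ℤ, ∃ s ∈ S, T (n + 1) = T n + (s : ℤ) + 1 := by
    intro n
    rcases lt_trichotomy n m with h | h | h
    · obtain ⟨s, hs, hg⟩ := hgap n
      exact ⟨s, hs, by rw [hT1 n h.le, hT1 (n + 1) (by omega), hg]⟩
    · subst h
      obtain ⟨s, hs, hg⟩ := rgap m'
      refine ⟨s, hs, ?_⟩
      rw [hT1 n le_rfl, hm, hT2 (n + 1) (by omega)]
      rw [show n + 1 - n + m' = m' + 1 by ring, hg, hm']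
      ring
    · obtain ⟨s, hs, hg⟩ := rgap (n - m + m')
      refine ⟨s, hs, ?_⟩
      rw [hT2 n h.le, hT2 (n + 1) (by omega)]
      rw [show n + 1 - m + m' = n - m + m' + 1 by ring, hg]
      ring
  have Tmono : StrictMono T := by
    apply strictMono_int_of_lt_succ
    intro n
    obtain ⟨s, _, hg⟩ := Tgap n
    omega
  have hzp : z p = x p := by
    show (if p < p then x p else y (p - p + q)) = x p
    rw [if_neg (lt_irrefl p), show p - p + q = q by ring, hq, hp]
  have hzx : ∀ i ≤ p, z i = x i := by
    intro i hi
    rcases lt_or_eq_of_le hi with h | h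
    · show (if i < p then x i else y (i - p + q)) = x i
      rw [if_pos h]
    · rw [h, hzp]
  have hzy : ∀ i, p ≤ i → z i = y (i - p + q) := by
    intro i hi
    rcases eq_or_lt_of_le hi with h | h
    · rw [← h, hzp, show p - p + q = q by ring, hp, hq]
    · show (if i < p then x i else y (i - p + q)) = y (i - p + q)
      rw [if_neg (by omega)]
  refine ⟨z, ⟨T, Tmono, Tgap, ?_⟩, hzx, hzy⟩
  intro i
  by_cases hip : i < p
  · rw [hzx i hip.le, hone i]
    constructor
    · rintro ⟨n, rfl⟩
      have hnm : n < m := ht.lt_iff_lt.1 (by omega)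
      exact ⟨n, hT1 n hnm.le⟩
    · rintro ⟨n, hn⟩
      rcases le_or_gt n m with h | h
      · exact ⟨n, by rw [← hT1 n h, hn]⟩
      · exfalso
        have := hr (show m' < n - m + m' by omega)
        rw [hT2 n h.le] at hn
        omega
  · push_neg at hip
    rw [hzy i hip, rone]
    constructor
    · rintro ⟨n, hn⟩
      have hn' : m' ≤ n := hr.le_iff_le.1 (by omega)
      refine ⟨n - m' + m, ?_⟩
      rw [hT2 (n - m' + m) (by omega), show n - m' + m - m + m' = n by ring, hn]
      ring
    · rintro ⟨n, hn⟩
      rcases le_or_gt n m with h | h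
      · rw [hT1 n h] at hn
        have hmm : t n ≤ t m := ht.le_iff_le.2 h
        have : n = m := ht.injective (by omega)
        subst this
        exact ⟨m', by omega⟩
      · rw [hT2 n h.le] at hn
        exact ⟨n - m + m', by omega⟩

/-- Inserting an extra gap after a `1`. -/
lemma gapConcat_insert {x : ℤ → Bool} (hx : x ∈ GapConcat S) {p : ℤ} (hp : x p = true)
    {s : ℕ} (hs : s ∈ S) :
    ∃ z ∈ GapConcat S, (∀ i ≤ p, z i = x i) ∧ z (p + (s : ℤ) + 1) = true := by
  obtain ⟨t, ht, hgap, hone⟩ := hx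
  obtain ⟨m, hm⟩ := (hone p).1 hp
  set z : ℤ → Bool := fun i => if i ≤ p then x i else
    (if i < p + (s : ℤ) + 1 then false else x (i - (s : ℤ) - 1)) with hz
  set T : ℤ → ℤ := fun n => if n ≤ m then t n else t (n - 1) + (s : ℤ) + 1 with hT
  have hT1 : ∀ n ≤ m, T n = t n := fun n hn => if_pos hn
  have hT2 : ∀ n, m < n → T n = t (n - 1) + (s : ℤ) + 1 := fun n hn => if_neg (by omega)
  have Tgap : ∀ n : ℤ, ∃ s' ∈ S, T (n + 1) = T n + (s' : ℤ) + 1 := by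
    intro n
    rcases lt_trichotomy n m with h | h | h
    · obtain ⟨s', hs', hg⟩ := hgap n
      exact ⟨s', hs', by rw [hT1 n h.le, hT1 (n + 1) (by omega), hg]⟩
    · subst h
      refine ⟨s, hs, ?_⟩
      rw [hT1 n le_rfl, hT2 (n + 1) (by omega)]
      rw [show n + 1 - 1 = n by ring]
    · obtain ⟨s', hs', hg⟩ := hgap (n - 1)
      refine ⟨s', hs', ?_⟩
      rw [hT2 n h, hT2 (n + 1) (by omega)]
      rw [show n + 1 - 1 = n - 1 + 1 by ring, hg]
      ring
  have Tmono : StrictMono T := by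
    apply strictMono_int_of_lt_succ
    intro n
    obtain ⟨s', _, hg⟩ := Tgap n
    omega
  have hmono : ∀ a b : ℤ, a ≤ b → t a ≤ t b := fun a b hab => ht.le_iff_le.2 hab
  refine ⟨z, ⟨T, Tmono, Tgap, ?_⟩, fun i hi => if_pos hi, ?_⟩
  · intro i
    rcases le_or_gt i p with hip | hip
    · rw [hz]
      simp only [if_pos hip]
      rw [hone i]
      constructor
      · rintro ⟨n, rfl⟩
        have hnm : n ≤ m := ht.le_iff_le.1 (by omega)
        exact ⟨n, hT1 n hnm⟩
      · rintro ⟨n, hn⟩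
        rcases le_or_gt n m with h | h
        · exact ⟨n, by rw [← hT1 n h, hn]⟩
        · exfalso
          have := hmono m (n - 1) (by omega)
          rw [hT2 n h] at hn
          omega
    · rcases lt_or_ge i (p + (s : ℤ) + 1) with his | his
      · rw [hz]
        simp only [if_neg (not_le.2 hip), if_pos his]
        constructor
        · intro h; exact absurd h (by simp)
        · rintro ⟨n, hn⟩
          exfalso
          rcases le_or_gt n m with h | h
          · have := hmono n m h
            rw [hT1 n h] at hn
            omega
          · have := hmono m (n - 1) (by omega)
            rw [hT2 n h] at hn
            omega
      · rw [hz]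
        simp only [if_neg (not_le.2 hip), if_neg (not_lt.2 his)]
        rw [hone (i - (s : ℤ) - 1)]
        constructor
        · rintro ⟨n, hn⟩
          have hnm : m ≤ n := ht.le_iff_le.1 (by omega)
          refine ⟨n + 1, ?_⟩
          rw [hT2 (n + 1) (by omega), show n + 1 - 1 = n by ring, hn]
          ring
        · rintro ⟨n, hn⟩
          rcases le_or_gt n m with h | h
          · exfalso
            have := hmono n m h
            rw [hT1 n h] at hn
            omega
          · rw [hT2 n h] at hn
            exact ⟨n - 1, by omega⟩
  · rw [hz]
    simp only [if_neg (show ¬ p + (s : ℤ) + 1 ≤ p by omega),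
      if_neg (lt_irrefl (p + (s : ℤ) + 1))]
    rw [show p + (s : ℤ) + 1 - (s : ℤ) - 1 = p by ring, hp]

/-- Chaining: glue `x` up to a `1` at `p`, a prescribed list of gaps, and then `y`
from a `1` at `q` onwards. -/
lemma gapConcat_chain : ∀ (l : List ℕ) {x y : ℤ → Bool}, x ∈ GapConcat S → y ∈ GapConcat S →
    ∀ {p q : ℤ}, x p = true → y q = true → (∀ g ∈ l, ∃ s ∈ S, g = s + 1) →
    ∃ z ∈ GapConcat S, (∀ i ≤ p, z i = x i) ∧
      (∀ i : ℤ, 0 ≤ i → z (p + (l.sum : ℤ) + i) = y (q + i)) := by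
  intro l
  induction l with
  | nil =>
    intro x y hx hy p q hp hq _
    obtain ⟨z, hz, h1, h2⟩ := gapConcat_splice hx hy hp hq
    refine ⟨z, hz, h1, fun i hi => ?_⟩
    rw [show p + ((List.sum [] : ℕ) : ℤ) + i = p + i by simp]
    rw [h2 (p + i) (by omega)]
    ring_nf
  | cons g tl ih =>
    intro x y hx hy p q hp hq hl
    obtain ⟨s, hs, hgs⟩ := hl g List.mem_cons_self
    obtain ⟨x', hx', ha, hb⟩ := gapConcat_insert hx hp hs
    obtain ⟨z, hz, h1, h2⟩ := ih hx' hy hb hq (fun g' hg' => hl g' (List.mem_cons_of_mem g hg'))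
    refine ⟨z, hz, ?_, ?_⟩
    · intro i hi
      rw [h1 i (by omega), ha i hi]
    · intro i hi
      have h := h2 i hi
      rw [show p + (((g :: tl).sum : ℕ) : ℤ) + i = p + (s : ℤ) + 1 + ((tl.sum : ℕ) : ℤ) + i by
        simp [hgs]; ring]
      exact h

/-- Frobenius-type lemma: if the gaps have gcd one, every large enough number is a
sum of gaps. -/
lemma exists_frobenius (hS : S.Nonempty)
    (h : ∀ d : ℕ, (∀ n ∈ S, d ∣ n + 1) → d = 1) :
    ∃ N0 : ℕ, ∀ n : ℕ, N0 ≤ n → ∃ l : List ℕ,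
      (∀ g ∈ l, ∃ s ∈ S, g = s + 1) ∧ l.sum = n := by
  set M : Set ℕ := {n | ∃ l : List ℕ, (∀ g ∈ l, ∃ s ∈ S, g = s + 1) ∧ l.sum = n} with hMdef
  have hM0 : 0 ∈ M := ⟨[], by simp, rfl⟩
  have hMadd : ∀ a ∈ M, ∀ b ∈ M, a + b ∈ M := by
    rintro a ⟨la, hla, rfl⟩ b ⟨lb, hlb, rfl⟩
    refine ⟨la ++ lb, ?_, by simp⟩
    intro g hg
    rcases List.mem_append.1 hg with h' | h'
    exacts [hla g h', hlb g h']
  have hMS : ∀ s ∈ S, s + 1 ∈ M := by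
    intro s hs
    refine ⟨[s + 1], ?_, by simp⟩
    intro g hg
    rw [List.mem_singleton] at hg
    exact ⟨s, hs, hg⟩
  have hMmul : ∀ (k : ℕ), ∀ a ∈ M, k * a ∈ M := by
    intro k
    induction k with
    | zero => intro a _; simpa using hM0
    | succ n ih =>
      intro a ha
      have := hMadd a ha (n * a) (ih a ha)
      rw [show (n + 1) * a = a + n * a by ring]
      exact this
  set H : AddSubgroup ℤ :=
    { carrier := {w : ℤ | ∃ a ∈ M, ∃ b ∈ M, w = (a : ℤ) - b}
      zero_mem' := ⟨0, hM0, 0, hM0, by simp⟩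
      add_mem' := by
        rintro w1 w2 ⟨a, ha, b, hb, rfl⟩ ⟨c, hc, d, hd, rfl⟩
        exact ⟨a + c, hMadd a ha c hc, b + d, hMadd b hb d hd, by push_cast; ring⟩
      neg_mem' := by
        rintro w ⟨a, ha, b, hb, rfl⟩
        exact ⟨b, hb, a, ha, by ring⟩ } with hHdef
  obtain ⟨g, hg⟩ := Int.subgroup_cyclic H
  have hdvd : ∀ s ∈ S, g.natAbs ∣ s + 1 := by
    intro s hs
    have hmem : ((s : ℤ) + 1) ∈ H := ⟨s + 1, hMS s hs, 0, hM0, by push_cast; ring⟩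
    rw [hg, AddSubgroup.mem_closure_singleton] at hmem
    obtain ⟨n, hn⟩ := hmem
    have hdv : g ∣ (s : ℤ) + 1 := ⟨n, by rw [← hn]; rw [smul_eq_mul]; ring⟩
    have hdv' : g.natAbs ∣ ((s : ℤ) + 1).natAbs := Int.natAbs_dvd_natAbs.2 hdv
    rwa [show ((s : ℤ) + 1) = ((s + 1 : ℕ) : ℤ) by push_cast; ring, Int.natAbs_natCast] at hdv'

  have hg1 : g.natAbs = 1 := h _ hdvd
  have h1H : (1 : ℤ) ∈ H := by
    rw [hg, AddSubgroup.mem_closure_singleton]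
    rcases Int.natAbs_eq g with he | he
    · exact ⟨1, by rw [he, hg1]; simp⟩
    · exact ⟨-1, by rw [he, hg1]; simp⟩
  obtain ⟨a, ha, b, hb, hab⟩ := h1H
  have hab' : a = b + 1 := by omega
  by_cases hb0 : b = 0
  · refine ⟨0, fun n _ => ?_⟩
    have h1M : 1 ∈ M := by rw [← show a = 1 by omega]; exact ha
    have := hMmul n 1 h1M
    rw [mul_one] at this; exact this
  · have hbpos : 0 < b := Nat.pos_of_ne_zero hb0
    refine ⟨b * b, fun n hn => ?_⟩
    have hr : n % b < b := Nat.mod_lt _ hbpos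
    have hk : b ≤ n / b := (Nat.le_div_iff_mul_le hbpos).2 hn
    have h2 : n % b ≤ n / b := le_trans hr.le hk
    obtain ⟨j, hj⟩ := Nat.exists_eq_add_of_le h2
    have key : n = j * b + (n % b) * (b + 1) := by
      have h1 := Nat.div_add_mod n b
      rw [hj] at h1
      ring_nf at h1 ⊢
      linarith
    rw [key]
    have m1 : j * b ∈ M := hMmul j b hb
    have m2 : (n % b) * (b + 1) ∈ M := by
      have : b + 1 ∈ M := by rw [← hab']; exact ha
      exact hMmul (n % b) (b + 1) this
    exact hMadd _ m1 _ m2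

end SGapHelpers
/-- The `S`-gap shift is mixing iff
`gcd {n + 1 : n ∈ S} = 1`. -/
theorem sGapShift_mixing_iff_gcd_one
    (S : Set ℕ) (hS : S.Nonempty) :
    IsMixingShift (SGapShift S) ↔ ∀ d : ℕ, (∀ n ∈ S, d ∣ n + 1) → d = 1 := by
  constructor
  · intro hmix d hd
    have hword : IsWordOf (SGapShift S) [true] := by
      obtain ⟨x, hx, h0⟩ := gapConcat_nonempty' hS
      refine ⟨x, gapConcat_subset_sGapShift hx, fun k => ?_⟩
      have hk : (k : ℕ) = 0 := by
        have h := k.isLt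
        simp only [List.length_singleton] at h
        omega
      simp only [List.get_eq_getElem, hk]
      simpa using h0
    obtain ⟨N, hN⟩ := hmix [true] [true] hword hword
    have key : ∀ n : ℕ, N ≤ n → (d : ℤ) ∣ (n : ℤ) + 1 := by
      intro n hn
      obtain ⟨w, hwlen, hword2⟩ := hN n hn
      obtain ⟨x, hx, hocc⟩ := word_of_gapConcat hS hword2
      obtain ⟨t, ht, hgap, hone⟩ := hx
      have hlen : ([true] ++ w ++ [true]).length = n + 2 := by simp [hwlen]
      have h0 : x 0 = true := by
        have h := hocc ⟨0, by omega⟩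
        simp only [List.get_eq_getElem] at h
        rw [List.getElem_append_left (show (0:ℕ) < ([true] ++ w).length by simp),
          List.getElem_append_left (show (0:ℕ) < ([true] : List Bool).length by simp)] at h
        simpa using h
      have h1 : x ((n : ℤ) + 1) = true := by
        have h := hocc ⟨n + 1, by omega⟩
        simp only [List.get_eq_getElem] at h
        rw [List.getElem_append_right
          (show ([true] ++ w).length ≤ n + 1 by simp [hwlen])] at h
        rw [List.getElem_singleton] at h
        rw [← h]
        congr 1
        push_cast
        ring
      obtain ⟨a, hA⟩ := (hone 0).1 h0
      obtain ⟨b, hB⟩ := (hone ((n : ℤ) + 1)).1 h1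
      have hdiv : ∀ k : ℕ, (d : ℤ) ∣ t (a + (k : ℤ)) - t a := by
        intro k
        induction k with
        | zero => simp
        | succ j ih =>
          obtain ⟨s', hs', hgj⟩ := hgap (a + (j : ℤ))
          have hds : (d : ℤ) ∣ (s' : ℤ) + 1 := by
            obtain ⟨c, hc⟩ := hd s' hs'
            exact ⟨c, by exact_mod_cast hc⟩
          rw [show a + ((j + 1 : ℕ) : ℤ) = (a + (j : ℤ)) + 1 by push_cast; ring, hgj,
            show t (a + (j : ℤ)) + (s' : ℤ) + 1 - t a
              = (t (a + (j : ℤ)) - t a) + ((s' : ℤ) + 1) by ring]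
          exact dvd_add ih hds
      have hab : a ≤ b := ht.le_iff_le.1 (by omega)
      have hfin := hdiv (b - a).toNat
      rw [show a + (((b - a).toNat : ℕ) : ℤ) = b by omega, hA, hB] at hfin
      simpa using hfin
    have d1 := key N le_rfl
    have d2 := key (N + 1) (by omega)
    have hd1 : (d : ℤ) ∣ 1 := by
      have h12 := dvd_sub d2 d1
      rwa [show ((N + 1 : ℕ) : ℤ) + 1 - ((N : ℤ) + 1) = 1 by push_cast; ring] at h12
    have : d ∣ 1 := by exact_mod_cast hd1
    exact Nat.dvd_one.mp this
  · intro hgcd u v hu hv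
    obtain ⟨N0, hN0⟩ := exists_frobenius hS hgcd
    obtain ⟨x, hx, hux⟩ := word_of_gapConcat hS hu
    obtain ⟨y, hy, hvy⟩ := word_of_gapConcat hS hv
    obtain ⟨t, ht, hgap, hone⟩ := id hx
    obtain ⟨r, hr, rgap, rone⟩ := id hy
    -- a one of `x` at position `p ≥ u.length`
    set k1 := (((u.length : ℤ)) - t 0).toNat with hk1
    have hp1 : ((u.length : ℤ)) ≤ t (k1 : ℤ) := by
      have h := strictMono_int_ge ht k1
      have h2 : ((u.length : ℤ)) - t 0 ≤ (k1 : ℤ) := Int.self_le_toNat _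
      omega
    have hpx : x (t (k1 : ℤ)) = true := (hone _).2 ⟨(k1 : ℤ), rfl⟩
    set p := t (k1 : ℤ) with hp
    -- a one of `y` at position `q ≤ 0`
    set k2 := (r 0).toNat with hk2
    have hq1 : r (-(k2 : ℤ)) ≤ 0 := by
      have h := strictMono_int_le hr k2
      have h2 : r 0 ≤ (k2 : ℤ) := Int.self_le_toNat _
      omega
    have hqy : y (r (-(k2 : ℤ))) = true := (rone _).2 ⟨_, rfl⟩
    set q := r (-(k2 : ℤ)) with hq
    set C := (p - q - (u.length : ℤ)).toNat with hCdef
    have hCeq : (C : ℤ) = p - q - (u.length : ℤ) := Int.toNat_of_nonneg (by omega)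
    refine ⟨N0 + C, fun n hn => ?_⟩
    obtain ⟨l, hl, hlsum⟩ := hN0 (n - C) (by omega)
    obtain ⟨z, hz, hz1, hz2⟩ := gapConcat_chain l hx hy hpx hqy hl
    set w : List Bool := (List.range n).map (fun j : ℕ => z ((u.length : ℤ) + (j : ℤ)))
      with hw
    have hwl : w.length = n := by simp [hw]
    refine ⟨w, hwl, z, gapConcat_subset_sGapShift hz, ?_⟩
    rintro ⟨i, hi⟩
    simp only [List.get_eq_getElem]
    have hi' : i < u.length + n + v.length := by
      simp only [List.length_append, hwl] at hi; omega
    rcases lt_or_ge i u.length with h1 | h1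
    · rw [List.getElem_append_left (show i < (u ++ w).length by simp [hwl]; omega),
        List.getElem_append_left h1]
      have hx1 := hux ⟨i, h1⟩
      simp only [List.get_eq_getElem] at hx1
      rw [← hx1]
      exact hz1 (0 + (i : ℤ)) (by omega)
    · rcases lt_or_ge i (u.length + n) with h2 | h2
      · rw [List.getElem_append_left (show i < (u ++ w).length by simp [hwl]; omega),
          List.getElem_append_right h1]
        simp only [hw, List.getElem_map, List.getElem_range]
        congr 1
        omega
      · rw [List.getElem_append_right (show (u ++ w).length ≤ i by simp [hwl]; omega)]
        simp only [List.length_append, hwl]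
        set j := i - (u.length + n) with hj
        have hjv : j < v.length := by omega
        have hy1 := hvy ⟨j, hjv⟩
        simp only [List.get_eq_getElem] at hy1
        have h := hz2 ((j : ℤ) - q) (by omega)
        rw [hlsum] at h
        rw [show p + ((n - C : ℕ) : ℤ) + ((j : ℤ) - q) = 0 + (i : ℤ) by omega,
          show q + ((j : ℤ) - q) = 0 + (j : ℤ) by ring] at h
        rw [h]
        exact hy1
end
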